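/- arXiv:1601.01140 — 8 statements merged into one kernel-verified Lean document; each statement's English description precedes it below -/
import Mathlib

section
/- Let w be an (m, M)-regular distance generating function with respect to (Z, ‖·‖), meaning (dw)_z(z') ≥ (m/2)‖z - z'‖² and ‖∇w(z) - ∇w(z')‖* ≤ M‖z - z'‖ for all z, z' ∈ Z. Then for all t > 0 and z, z', z̃ ∈ Z: (1 + 1/t)⁻¹ (dw)_z(z') ≤ (M/m) [(dw)_z(z̃) + t (dw)_{z̃}(z')]. -/
set_option maxHeartbeats 1000000


open RealInnerProductSpace

/-- If `w` is an `(m, M)`-regular distance generating function with respect to `(Zs, p)`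
(lower quadratic growth of the Bregman distance and `M`-Lipschitz gradient in the dual
seminorm, expressed pointwise as `⟪g z - g z', u⟫ ≤ M * p (z - z') * p u`), then for all
`t > 0` and `z, z', ztl ∈ Zs`:
`(1 + 1/t)⁻¹ (dw)_z(z') ≤ (M/m) [(dw)_z(ztl) + t (dw)_{ztl}(z')]`. -/
theorem stmt2 {E : Type*} [NormedAddCommGroup E] [InnerProductSpace ℝ E]
    [FiniteDimensional ℝ E]
    (w : E → ℝ) (g : E → E) (Zs : Set E) (p : Seminorm ℝ E)
    (m M : ℝ) (hm : 0 < m) (hM : 0 < M)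
    (hZconv : Convex ℝ Zs)
    (hg : ∀ z ∈ Zs, HasGradientAt w (g z) z)
    (D : E → E → ℝ)
    (hD : ∀ z z' : E, D z z' = w z' - w z - ⟪g z, z' - z⟫)
    (hreg1 : ∀ z ∈ Zs, ∀ z' ∈ Zs, m / 2 * p (z - z') ^ 2 ≤ D z z')
    (hreg2 : ∀ z ∈ Zs, ∀ z' ∈ Zs, ∀ u : E, ⟪g z - g z', u⟫ ≤ M * p (z - z') * p u)
    (t : ℝ) (ht : 0 < t) (z z' ztl : E) (hz : z ∈ Zs) (hz' : z' ∈ Zs) (hztl : ztl ∈ Zs) :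
    (1 + 1 / t)⁻¹ * D z z' ≤ M / m * (D z ztl + t * D ztl z') := by
  have hA : m / 2 * p (z - ztl) ^ 2 ≤ D z ztl := hreg1 z hz ztl hztl
  have hB : m / 2 * p (ztl - z') ^ 2 ≤ D ztl z' := hreg1 ztl hztl z' hz'
  have hA0 : (0:ℝ) ≤ D z ztl := le_trans (by positivity) hA
  have hB0 : (0:ℝ) ≤ D ztl z' := le_trans (by positivity) hB
  have ht1 : (0:ℝ) < 1 + 1 / t := by positivity
  have key : D z z' = D z ztl + D ztl z' + ⟪g ztl - g z, z' - ztl⟫ := by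
    simp only [hD, inner_sub_left, inner_sub_right]
    ring
  have hb1 : ⟪g ztl - g z, z' - ztl⟫ ≤ M * p (ztl - z) * p (z' - ztl) :=
    hreg2 ztl hztl z hz (z' - ztl)
  rw [map_sub_rev p ztl z, map_sub_rev p z' ztl] at hb1
  have hp1 : (0:ℝ) ≤ p (z - ztl) := apply_nonneg p _
  have hp2 : (0:ℝ) ≤ p (ztl - z') := apply_nonneg p _
  rcases le_or_gt m M with hmM | hMm
  · -- main case m ≤ M
    rw [inv_mul_le_iff₀ ht1]
    have hsq : (0:ℝ) ≤ (p (z - ztl) - t * p (ztl - z'))^2 := sq_nonneg _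
    rw [key]
    have h1 : D z ztl + D ztl z' + ⟪g ztl - g z, z' - ztl⟫
        ≤ D z ztl + D ztl z' + M * (p (z - ztl) ^ 2 / (2 * t) + t * p (ztl - z') ^ 2 / 2) := by
      have : M * p (z - ztl) * p (ztl - z')
          ≤ M * (p (z - ztl) ^ 2 / (2 * t) + t * p (ztl - z') ^ 2 / 2) := by
        rw [mul_assoc]
        apply mul_le_mul_of_nonneg_left _ hM.le
        rw [div_add_div _ _ (by positivity) (by norm_num), le_div_iff₀ (by positivity)]
        nlinarith [hsq]
      linarith [le_trans hb1 this]
    refine le_trans h1 ?_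
    have hAq : p (z - ztl) ^ 2 ≤ 2 / m * D z ztl := by
      rw [div_mul_eq_mul_div, le_div_iff₀ hm]; nlinarith
    have hBq : p (ztl - z') ^ 2 ≤ 2 / m * D ztl z' := by
      rw [div_mul_eq_mul_div, le_div_iff₀ hm]; nlinarith
    have hMm' : (1:ℝ) ≤ M / m := (one_le_div hm).mpr hmM
    have expand : (1 + 1 / t) * (M / m * (D z ztl + t * D ztl z'))
        = M / m * D z ztl + M / m * (t * D ztl z') + M / m * (1 / t * D z ztl)
          + M / m * D ztl z' := by field_simp; ring
    rw [expand]
    have e1 : D z ztl ≤ M / m * D z ztl := le_mul_of_one_le_left hA0 hMm'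
    have e2 : D ztl z' ≤ M / m * D ztl z' := le_mul_of_one_le_left hB0 hMm'
    have e3 : M * (p (z - ztl) ^ 2 / (2 * t)) ≤ M / m * (1 / t * D z ztl) := by
      have := mul_le_mul_of_nonneg_left hAq hM.le
      calc M * (p (z - ztl) ^ 2 / (2 * t)) = M * p (z - ztl) ^ 2 / (2 * t) := by ring
        _ ≤ M * (2 / m * D z ztl) / (2 * t) := by
            apply div_le_div_of_nonneg_right this (by positivity) |>.trans_eq rfl
        _ = M / m * (1 / t * D z ztl) := by field_simp
    have e4 : M * (t * p (ztl - z') ^ 2 / 2) ≤ M / m * (t * D ztl z') := by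
      have := mul_le_mul_of_nonneg_left hBq hM.le
      calc M * (t * p (ztl - z') ^ 2 / 2) = t * (M * p (ztl - z') ^ 2) / 2 := by ring
        _ ≤ t * (M * (2 / m * D ztl z')) / 2 := by
            apply div_le_div_of_nonneg_right (mul_le_mul_of_nonneg_left this ht.le) (by norm_num)
        _ = M / m * (t * D ztl z') := by field_simp
    nlinarith [e1, e2, e3, e4]
  · -- degenerate case m > M : everything vanishes
    have hsum : D z z' + D z' z = ⟪g z - g z', z - z'⟫ := by
      simp only [hD, inner_sub_left, inner_sub_right]
      ring
    have hub : ⟪g z - g z', z - z'⟫ ≤ M * p (z - z') ^ 2 := by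
      have h := hreg2 z hz z' hz' (z - z')
      calc ⟪g z - g z', z - z'⟫ ≤ M * p (z - z') * p (z - z') := h
        _ = M * p (z - z') ^ 2 := by ring
    have hlb : m * p (z - z') ^ 2 ≤ D z z' + D z' z := by
      have h1 := hreg1 z hz z' hz'
      have h2 := hreg1 z' hz' z hz
      rw [map_sub_rev p z' z] at h2
      linarith
    have hp0 : p (z - z') = 0 := by
      have : (m - M) * p (z - z') ^ 2 ≤ 0 := by
        rw [hsum] at hlb; nlinarith [le_trans hlb hub]
      by_contra h
      have hpp : 0 < p (z - z') := lt_of_le_of_ne (apply_nonneg p _) (Ne.symm h)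
      have h2 : 0 < (m - M) * p (z - z') ^ 2 := mul_pos (by linarith) (pow_pos hpp 2)
      linarith
    have hDzz'0 : D z z' ≤ 0 := by
      have h2 : (0:ℝ) ≤ D z' z := le_trans (by positivity) (hreg1 z' hz' z hz)
      have hs : D z z' + D z' z ≤ 0 := by
        rw [hsum]
        have := hub
        rw [hp0] at this
        simpa using this
      linarith
    have : (1 + 1/t)⁻¹ * D z z' ≤ 0 := mul_nonpos_of_nonneg_of_nonpos (by positivity) hDzz'0
    refine this.trans ?_
    positivity
end

section
/- Let δ ∈ (0,1] and define w : ℝⁿ → (-∞,∞] by w(x) = Σᵢ (xᵢ + δ/n) log(xᵢ + δ/n) for x with xᵢ + δ/n > 0 (and +∞ otherwise), and let Z = {x ∈ ℝⁿ : Σ xᵢ = 1, xᵢ ≥ 0}. Then for all x, y ∈ Z, the Bregman distance satisfies (dw)_x(y) ≥ (1/(2(1+δ)))‖x - y‖₁² and ‖∇w(x) - ∇w(y)‖_∞ ≤ (n/δ)‖x - y‖₁, i.e., w is (1/(1+δ), n/δ)-regular with respect to (Z, ‖·‖₁). -/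
open Finset

-- log t vs 2(t-1)/(t+1)
private lemma aux_u_mono : MonotoneOn (fun t : ℝ => Real.log t - (2*t-2)/(t+1)) (Set.Ioi 0) := by
  have hd : ∀ t ∈ Set.Ioi (0:ℝ), HasDerivAt (fun t : ℝ => Real.log t - (2*t-2)/(t+1))
      ((t-1)^2/(t*(t+1)^2)) t := by
    intro t ht
    have ht0 : (0:ℝ) < t := ht
    have h1 : HasDerivAt Real.log t⁻¹ t := Real.hasDerivAt_log (ne_of_gt ht0)
    have h2 : HasDerivAt (fun t : ℝ => 2*t-2) 2 t := by
      simpa using ((hasDerivAt_id t).const_mul 2).sub_const 2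
    have h3 : HasDerivAt (fun t : ℝ => t+1) 1 t := (hasDerivAt_id t).add_const 1
    have h4 := h2.div h3 (by nlinarith : t + 1 ≠ 0)
    have := h1.sub h4
    refine this.congr_deriv ?_
    field_simp
    ring
  apply monotoneOn_of_deriv_nonneg (convex_Ioi 0)
  · apply ContinuousOn.sub
    · exact Real.continuousOn_log.mono (fun t ht => ne_of_gt ht)
    · apply ContinuousOn.div (by fun_prop) (by fun_prop)
      intro t ht
      have : (0:ℝ) < t := ht
      nlinarith
  · intro t ht
    rw [interior_Ioi] at ht
    exact (hd t ht).differentiableAt.differentiableWithinAt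
  · intro t ht
    rw [interior_Ioi] at ht
    rw [(hd t ht).deriv]
    have ht0 : (0:ℝ) < t := ht
    apply div_nonneg (sq_nonneg _)
    positivity


private noncomputable def auxh (t : ℝ) : ℝ := t * Real.log t - t + 1 - 3*(t-1)^2/(2*(t+2))

private lemma auxh_hasDeriv {t : ℝ} (ht0 : 0 < t) :
    HasDerivAt auxh (Real.log t - 3*(t-1)*(t+5)/(2*(t+2)^2)) t := by
  have h1 : HasDerivAt (fun t : ℝ => t * Real.log t) (Real.log t + 1) t := by
    have := (hasDerivAt_id t).mul (Real.hasDerivAt_log (ne_of_gt ht0))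
    refine this.congr_deriv ?_
    field_simp
    simp only [id]; ring
  have h2 : HasDerivAt (fun t : ℝ => 3*(t-1)^2) (6*(t-1)) t := by
    have h2a : HasDerivAt (fun t : ℝ => (t-1)^2) (2*(t-1)) t := by
      exact (((hasDerivAt_id t).sub_const 1).pow 2).congr_deriv (by simp)
    have h2b := h2a.const_mul 3
    refine h2b.congr_deriv ?_
    ring
  have h3 : HasDerivAt (fun t : ℝ => 2*(t+2)) 2 t := by
    simpa using ((hasDerivAt_id t).add_const 2).const_mul 2
  have h4 := h2.div h3 (by nlinarith : 2*(t+2) ≠ 0)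
  have h5 := ((h1.sub (hasDerivAt_id t)).add_const 1).sub h4
  unfold auxh
  refine h5.congr_deriv ?_
  have h6 : t + 2 ≠ 0 := by nlinarith
  field_simp [h6]
  ring

private lemma auxh_nonneg {t : ℝ} (ht0 : 0 < t) : 0 ≤ auxh t := by
  have h1 : auxh 1 = 0 := by norm_num [auxh]
  have hcont : ∀ s : Set ℝ, s ⊆ Set.Ioi 0 → ContinuousOn auxh s := by
    intro s hs
    unfold auxh
    apply ContinuousOn.sub
    · apply ContinuousOn.add
      · exact ContinuousOn.sub
          (ContinuousOn.mul continuousOn_id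
            (Real.continuousOn_log.mono (fun t ht => ne_of_gt (hs ht))))
          continuousOn_id
      · exact continuousOn_const
    · exact ContinuousOn.div (by fun_prop) (by fun_prop)
        (fun t ht => by have : (0:ℝ) < t := hs ht; nlinarith)
  rcases le_total 1 t with h | h
  · have hmono : MonotoneOn auxh (Set.Ici 1) := by
      apply monotoneOn_of_deriv_nonneg (convex_Ici 1)
        (hcont _ (fun t ht => Set.mem_Ioi.2 (lt_of_lt_of_le one_pos ht)))
      · intro s hs
        rw [interior_Ici] at hs
        have : (0:ℝ) < s := lt_trans one_pos hs
        exact (auxh_hasDeriv this).differentiableAt.differentiableWithinAt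
      · intro s hs
        rw [interior_Ici] at hs
        have hs1 : (1:ℝ) < s := hs
        have hs0 : (0:ℝ) < s := lt_trans one_pos hs1
        rw [(auxh_hasDeriv hs0).deriv]
        have hlog : (2*s-2)/(s+1) ≤ Real.log s := by
          have := aux_u_mono (Set.mem_Ioi.2 one_pos) (Set.mem_Ioi.2 hs0) hs1.le
          simp only [Real.log_one] at this
          norm_num at this
          linarith
        have hq : 3*(s-1)*(s+5)/(2*(s+2)^2) ≤ (2*s-2)/(s+1) := by
          rw [div_le_div_iff₀ (by nlinarith) (by nlinarith)]
          nlinarith [mul_nonneg (sq_nonneg (s-1)) (sub_nonneg.2 hs1.le)]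
        linarith
    have := hmono Set.self_mem_Ici (Set.mem_Ici.2 h) h
    rw [h1] at this; exact this
  · have hanti : AntitoneOn auxh (Set.Ioc 0 1) := by
      apply antitoneOn_of_deriv_nonpos (convex_Ioc 0 1) (hcont _ Set.Ioc_subset_Ioi_self)
      · intro s hs
        rw [interior_Ioc] at hs
        exact (auxh_hasDeriv hs.1).differentiableAt.differentiableWithinAt
      · intro s hs
        rw [interior_Ioc] at hs
        obtain ⟨hs0, hs1⟩ := hs
        rw [(auxh_hasDeriv hs0).deriv]
        have hlog : Real.log s ≤ (2*s-2)/(s+1) := by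
          have := aux_u_mono (Set.mem_Ioi.2 hs0) (Set.mem_Ioi.2 one_pos) hs1.le
          simp only [Real.log_one] at this
          norm_num at this
          linarith
        have hq : (2*s-2)/(s+1) ≤ 3*(s-1)*(s+5)/(2*(s+2)^2) := by
          rw [div_le_div_iff₀ (by nlinarith) (by nlinarith)]
          nlinarith [mul_nonneg (sq_nonneg (s-1)) (sub_nonneg.2 hs1.le)]
        linarith
    have := hanti (Set.mem_Ioc.2 ⟨ht0, h⟩) (Set.mem_Ioc.2 ⟨one_pos, le_refl 1⟩) h
    rw [h1] at this; exact this

private lemma aux_pointwise {a b : ℝ} (ha : 0 < a) (hb : 0 < b) :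
    3*(b-a)^2/(2*(b+2*a)) ≤ b * Real.log (b/a) - b + a := by
  have ht : 0 < b/a := div_pos hb ha
  have h := auxh_nonneg ht
  unfold auxh at h
  have ha' : a ≠ 0 := ne_of_gt ha
  have key : a * (b/a * Real.log (b/a) - b/a + 1 - 3*(b/a-1)^2/(2*(b/a+2))) =
      b * Real.log (b/a) - b + a - 3*(b-a)^2/(2*(b+2*a)) := by
    have hden : b + 2*a ≠ 0 := by nlinarith
    field_simp
  nlinarith [mul_nonneg ha.le h]

private lemma aux_log_lip {m a b : ℝ} (hm : 0 < m) (hma : m ≤ a) (hmb : m ≤ b) :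
    |Real.log a - Real.log b| ≤ |a - b| / m := by
  wlog hab : b ≤ a generalizing a b
  · rw [abs_sub_comm, abs_sub_comm a b]
    exact this hmb hma (le_of_not_ge hab)
  have ha : 0 < a := lt_of_lt_of_le hm hma
  have hb : 0 < b := lt_of_lt_of_le hm hmb
  rw [abs_of_nonneg (sub_nonneg.2 (Real.log_le_log hb hab)),
    abs_of_nonneg (sub_nonneg.2 hab)]
  have h1 : Real.log a - Real.log b = Real.log (a/b) :=
    (Real.log_div (ne_of_gt ha) (ne_of_gt hb)).symm
  have h2 : Real.log (a/b) ≤ a/b - 1 := Real.log_le_sub_one_of_pos (div_pos ha hb)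
  have h3 : a/b - 1 = (a-b)/b := by field_simp
  have h4 : (a-b)/b ≤ (a-b)/m := by gcongr
  linarith


/-- The entropy-like function `w(x) = Σᵢ (xᵢ + δ/n) log(xᵢ + δ/n)` is
`(1/(1+δ), n/δ)`-regular on the unit simplex with respect to the ℓ₁-norm:
`(dw)_x(y) ≥ (1/(2(1+δ))) ‖x - y‖₁²` and `‖∇w(x) - ∇w(y)‖_∞ ≤ (n/δ) ‖x - y‖₁`. -/
theorem stmt8 (n : ℕ) (hn : 0 < n) (δ : ℝ) (hδ0 : 0 < δ) (hδ1 : δ ≤ 1)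
    (w : (Fin n → ℝ) → ℝ)
    (hw : ∀ x, w x = ∑ i, (x i + δ / n) * Real.log (x i + δ / n))
    (gw : (Fin n → ℝ) → Fin n → ℝ)
    (hgw : ∀ x i, gw x i = Real.log (x i + δ / n) + 1)
    (D : (Fin n → ℝ) → (Fin n → ℝ) → ℝ)
    (hD : ∀ x y, D x y = w y - w x - ∑ i, gw x i * (y i - x i))
    (x y : Fin n → ℝ)
    (hx : (∑ i, x i) = 1 ∧ ∀ i, 0 ≤ x i)
    (hy : (∑ i, y i) = 1 ∧ ∀ i, 0 ≤ y i) :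
    1 / (2 * (1 + δ)) * (∑ i, |x i - y i|) ^ 2 ≤ D x y ∧
    ∀ i, |gw x i - gw y i| ≤ n / δ * ∑ j, |x j - y j| := by
  obtain ⟨hxs, hxn⟩ := hx
  obtain ⟨hys, hyn⟩ := hy
  have hn' : (0:ℝ) < n := Nat.cast_pos.2 hn
  have hm0 : (0:ℝ) < δ / n := div_pos hδ0 hn'
  set a : Fin n → ℝ := fun i => x i + δ / n with ha_def
  set b : Fin n → ℝ := fun i => y i + δ / n with hb_def
  have ha : ∀ i, 0 < a i := fun i => add_pos_of_nonneg_of_pos (hxn i) hm0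
  have hb : ∀ i, 0 < b i := fun i => add_pos_of_nonneg_of_pos (hyn i) hm0
  have hsum : ∀ z : Fin n → ℝ, (∑ i, z i) = 1 → ∑ i, (z i + δ / n) = 1 + δ := by
    intro z hz
    rw [Finset.sum_add_distrib, hz, Finset.sum_const, card_univ, Fintype.card_fin,
      nsmul_eq_mul]
    field_simp
  have hSa : ∑ i, a i = 1 + δ := hsum x hxs
  have hSb : ∑ i, b i = 1 + δ := hsum y hys
  have habs : ∀ i, |x i - y i| = |b i - a i| := by
    intro i
    rw [abs_sub_comm]
    congr 1
    simp [ha_def, hb_def]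
  constructor
  · -- Pinsker part
    have hDxy : D x y = ∑ i, (b i * Real.log (b i / a i) - b i + a i) := by
      rw [hD x y, hw x, hw y, ← Finset.sum_sub_distrib, ← Finset.sum_sub_distrib]
      apply Finset.sum_congr rfl
      intro i _
      rw [hgw]
      rw [Real.log_div (ne_of_gt (hb i)) (ne_of_gt (ha i))]
      show b i * Real.log (b i) - a i * Real.log (a i) -
        (Real.log (a i) + 1) * (y i - x i) = _
      have : y i - x i = b i - a i := by simp only [ha_def, hb_def]; ring
      rw [this]
      ring
    have hD1 : ∑ i, 3*(b i - a i)^2/(2*(b i + 2*a i)) ≤ D x y := by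
      rw [hDxy]
      exact Finset.sum_le_sum (fun i _ => aux_pointwise (ha i) (hb i))
    set W : Fin n → ℝ := fun i => 2*(b i + 2*a i) with hW_def
    have hW : ∀ i, 0 < W i := fun i => by have := ha i; have := hb i; simp [hW_def]; nlinarith
    have hSW : ∑ i, W i = 6 * (1 + δ) := by
      simp only [hW_def]
      rw [← Finset.mul_sum, Finset.sum_add_distrib, ← Finset.mul_sum, hSa, hSb]
      ring
    have hcs := Finset.sum_mul_sq_le_sq_mul_sq Finset.univ
      (fun i => |b i - a i| / Real.sqrt (W i)) (fun i => Real.sqrt (W i))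
    have e1 : ∀ i : Fin n, |b i - a i| / Real.sqrt (W i) * Real.sqrt (W i) = |b i - a i| := by
      intro i
      exact div_mul_cancel₀ _ (ne_of_gt (Real.sqrt_pos.2 (hW i)))
    have e2 : ∀ i : Fin n, (|b i - a i| / Real.sqrt (W i))^2 = (b i - a i)^2 / W i := by
      intro i
      rw [div_pow, sq_abs, Real.sq_sqrt (hW i).le]
    have e3 : ∀ i : Fin n, (Real.sqrt (W i))^2 = W i := fun i => Real.sq_sqrt (hW i).le
    rw [Finset.sum_congr rfl (fun i _ => e1 i), Finset.sum_congr rfl (fun i _ => e2 i),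
      Finset.sum_congr rfl (fun i _ => e3 i), hSW] at hcs
    -- hcs : (∑ |b-a|)^2 ≤ (∑ (b-a)^2 / W) * (6*(1+δ))
    have hQ : ∑ i, 3*(b i - a i)^2/(2*(b i + 2*a i)) = 3 * ∑ i, (b i - a i)^2 / W i := by
      rw [Finset.mul_sum]
      apply Finset.sum_congr rfl
      intro i _
      rw [hW_def]
      ring
    have hP : (∑ i, |x i - y i|) = ∑ i, |b i - a i| :=
      Finset.sum_congr rfl (fun i _ => habs i)
    rw [hP]
    rw [hQ] at hD1
    have h1δ : (0:ℝ) < 1 + δ := by linarith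
    rw [div_mul_eq_mul_div, one_mul, div_le_iff₀ (by linarith)]
    nlinarith [hcs, hD1]
  · -- Lipschitz part
    intro i
    have h1 : gw x i - gw y i = Real.log (a i) - Real.log (b i) := by
      rw [hgw, hgw]; ring
    rw [h1]
    have h2 := aux_log_lip hm0 (by have := hxn i; simp only [ha_def]; linarith : δ / n ≤ a i)
      (by have := hyn i; simp only [hb_def]; linarith : δ / n ≤ b i)
    have h3 : |a i - b i| = |x i - y i| := by
      congr 1
      simp only [ha_def, hb_def]
      ring
    have h4 : |x i - y i| / (δ / n) = n / δ * |x i - y i| := by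
      field_simp
    have h5 : |x i - y i| ≤ ∑ j, |x j - y j| :=
      Finset.single_le_sum (f := fun j => |x j - y j|) (fun j _ => abs_nonneg _)
        (Finset.mem_univ i)
    calc |Real.log (a i) - Real.log (b i)| ≤ |a i - b i| / (δ / n) := h2
      _ = n / δ * |x i - y i| := by rw [h3, h4]
      _ ≤ n / δ * ∑ j, |x j - y j| := by
          apply mul_le_mul_of_nonneg_left h5
          positivity
end

section
/- (NE-HPE descent inequality) Suppose z_{k-1}, z_k ∈ int(dom w), z̃_k ∈ dom w, λ_k > 0, ε_k ≥ 0, η_k, η_{k-1} ≥ 0, σ ∈ [0,1), τ ∈ (0,1), r_k := (1/λ_k)(∇w(z_{k-1}) - ∇w(z_k)), and the error condition (dw)_{z_k}(z̃_k) + λ_k ε_k + η_k ≤ σ (dw)_{z_{k-1}}(z̃_k) + (1-τ)η_{k-1} holds. Then for every z ∈ dom w: (dw)_{z_{k-1}}(z) - (dw)_{z_k}(z) + (1-τ)η_{k-1} ≥ (1-σ)(dw)_{z_{k-1}}(z̃_k) + λ_k(⟨r_k, z̃_k - z⟩ + ε_k) + η_k. -/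
open RealInnerProductSpace

/-- NE-HPE descent inequality: under the relative error condition
`(dw)_{z_k}(z̃_k) + λ_k ε_k + η_k ≤ σ (dw)_{z_{k-1}}(z̃_k) + (1-τ) η_{k-1}`, for every `z`:
`(dw)_{z_{k-1}}(z) - (dw)_{z_k}(z) + (1-τ)η_{k-1}
  ≥ (1-σ)(dw)_{z_{k-1}}(z̃_k) + λ_k(⟪r_k, z̃_k - z⟫ + ε_k) + η_k`. -/
theorem stmt11 {E : Type*} [NormedAddCommGroup E] [InnerProductSpace ℝ E]
    [FiniteDimensional ℝ E]
    (w : E → ℝ) (g : E → E)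
    (hg : ∀ x : E, HasGradientAt w (g x) x)
    (D : E → E → ℝ)
    (hD : ∀ z z' : E, D z z' = w z' - w z - ⟪g z, z' - z⟫)
    (zkm zk ztlk : E) (lamk εk ηk ηkm σ τ : ℝ)
    (hlamk : 0 < lamk) (hεk : 0 ≤ εk) (hηk : 0 ≤ ηk) (hηkm : 0 ≤ ηkm)
    (hσ0 : 0 ≤ σ) (hσ1 : σ < 1) (hτ0 : 0 < τ) (hτ1 : τ < 1)
    (rk : E) (hrk : rk = (1 / lamk) • (g zkm - g zk))
    (herr : D zk ztlk + lamk * εk + ηk ≤ σ * D zkm ztlk + (1 - τ) * ηkm) :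
    ∀ z : E, (1 - σ) * D zkm ztlk + lamk * (⟪rk, ztlk - z⟫ + εk) + ηk ≤
      D zkm z - D zk z + (1 - τ) * ηkm := by
  intro z
  have hne : lamk ≠ 0 := ne_of_gt hlamk
  have hip : lamk * ⟪rk, ztlk - z⟫ = ⟪g zkm - g zk, ztlk - z⟫ := by
    rw [hrk, real_inner_smul_left]; field_simp
  have key : ⟪g zkm - g zk, ztlk - z⟫ =
      (D zkm z - D zk z) - (D zkm ztlk - D zk ztlk) := by
    simp only [hD, inner_sub_left, inner_sub_right]
    ring
  have := herr
  nlinarith [key, hip, herr]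
end

section
/- (Geometric contraction of regularized NE-HPE) Under the setting of Framework 1 — w an (m,M)-regular distance generating function w.r.t. (Z, ‖·‖), S μ-monotone w.r.t. w with μ > 0, operators S, T maximal monotone with Dom(T) ⊂ Z, iterates satisfying r_k = (1/λ_k)(∇w(z_{k-1}) - ∇w(z_k)) ∈ (S + T^{[ε_k]})(z̃_k), λ_k ≥ λ > 0, and (dw)_{z_k}(z̃_k) + λ_k ε_k + η_k ≤ σ(dw)_{z_{k-1}}(z̃_k) + (1-τ)η_{k-1} with σ ∈ [0,1), τ ∈ (0,1) — define τ̲ := min{ (m/M)(1/(1-σ) + 1/(μλ))⁻¹, τ }. Then τ̲ ∈ (0,1) and for every z* with 0 ∈ (S+T)(z*) and every k > ℓ ≥ 0: (dw)_{z_k}(z*) + η_k ≤ (1 - τ̲)^{k-ℓ} [(dw)_{z_ℓ}(z*) + η_ℓ]. -/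
open RealInnerProductSpace

lemma auxSum13 (n : ℕ) : ∑ i ∈ Finset.range n, ((i : ℝ) + 1) = n * (n + 1) / 2 := by
  induction n with
  | zero => simp
  | succ n ih =>
    rw [Finset.sum_range_succ, ih]
    push_cast
    ring

set_option maxHeartbeats 1600000 in
/-- Geometric contraction of the regularized NE-HPE framework (Framework 1): with
`w` `(m,M)`-regular w.r.t. `(Zs, p)`, `S` `μ`-monotone w.r.t. `w`, iterates satisfying
`r_k = (1/λ_k)(∇w(z_{k-1}) - ∇w(z_k)) ∈ (S + T^{[ε_k]})(z̃_k)`, `λ_k ≥ λ > 0`, and the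
error condition, and `τ̲ := min{(m/M)(1/(1-σ) + 1/(μλ))⁻¹, τ}`, one has `τ̲ ∈ (0,1)`
and `(dw)_{z_k}(z*) + η_k ≤ (1-τ̲)^{k-ℓ}[(dw)_{z_ℓ}(z*) + η_ℓ]` for every solution
`z*` of `0 ∈ (S+T)(z)` and all `k > ℓ ≥ 0`. -/
theorem stmt13 {E : Type*} [NormedAddCommGroup E] [InnerProductSpace ℝ E]
    [FiniteDimensional ℝ E]
    (w : E → ℝ) (g : E → E) (Zs : Set E) (p : Seminorm ℝ E)
    (m M : ℝ) (hm : 0 < m) (hM : 0 < M)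
    (hZconv : Convex ℝ Zs)
    (hg : ∀ z ∈ Zs, HasGradientAt w (g z) z)
    (D : E → E → ℝ)
    (hD : ∀ z z' : E, D z z' = w z' - w z - ⟪g z, z' - z⟫)
    (hreg1 : ∀ z ∈ Zs, ∀ z' ∈ Zs, m / 2 * p (z - z') ^ 2 ≤ D z z')
    (hreg2 : ∀ z ∈ Zs, ∀ z' ∈ Zs, ∀ u : E, ⟪g z - g z', u⟫ ≤ M * p (z - z') * p u)
    (S T : E → Set E) (μ lam σ τ : ℝ)
    (hμ : 0 < μ) (hlam : 0 < lam) (hσ0 : 0 ≤ σ) (hσ1 : σ < 1) (hτ0 : 0 < τ) (hτ1 : τ < 1)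
    (hDomT : ∀ x : E, (T x).Nonempty → x ∈ Zs)
    (hSmono : ∀ z ∈ Zs, ∀ z' ∈ Zs, ∀ s ∈ S z, ∀ s' ∈ S z',
      μ * (D z z' + D z' z) ≤ ⟪z - z', s - s'⟫)
    (hTmono : ∀ z z' v v' : E, v ∈ T z → v' ∈ T z' → 0 ≤ ⟪z - z', v - v'⟫)
    (zk ztlk : ℕ → E) (lamk εk ηk : ℕ → ℝ)
    (hzZ : ∀ k, zk k ∈ Zs) (hztlZ : ∀ k, ztlk k ∈ Zs)
    (hlamk : ∀ k, lam ≤ lamk k) (hε : ∀ k, 0 ≤ εk k) (hη : ∀ k, 0 ≤ ηk k)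
    (hincl : ∀ k : ℕ, 1 ≤ k → ∃ ra rb : E, ra ∈ S (ztlk k) ∧
      (∀ z' v' : E, v' ∈ T z' → -(εk k) ≤ ⟪rb - v', ztlk k - z'⟫) ∧
      (1 / lamk k) • (g (zk (k - 1)) - g (zk k)) = ra + rb)
    (herr : ∀ k : ℕ, 1 ≤ k →
      D (zk k) (ztlk k) + lamk k * εk k + ηk k ≤
        σ * D (zk (k - 1)) (ztlk k) + (1 - τ) * ηk (k - 1))
    (tlow : ℝ)
    (htlow : tlow = min (m / M * (1 / (1 - σ) + 1 / (μ * lam))⁻¹) τ) :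
    (0 < tlow ∧ tlow < 1) ∧
    ∀ zstar : E, (∃ a b : E, a ∈ S zstar ∧ b ∈ T zstar ∧ a + b = 0) →
      ∀ k ℓ : ℕ, ℓ < k →
        D (zk k) zstar + ηk k ≤ (1 - tlow) ^ (k - ℓ) * (D (zk ℓ) zstar + ηk ℓ) := by
  have hσ1' : (0:ℝ) < 1 - σ := by linarith
  have hmulam : (0:ℝ) < μ * lam := mul_pos hμ hlam
  have hinvpos : 0 < (1 / (1 - σ) + 1 / (μ * lam))⁻¹ := by
    apply inv_pos.mpr
    have h1 : 0 < 1 / (1 - σ) := by positivity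
    have h2 : 0 < 1 / (μ * lam) := by positivity
    linarith
  have htlowpos : 0 < tlow := by
    rw [htlow]
    exact lt_min (mul_pos (div_pos hm hM) hinvpos) hτ0
  have htlowτ : tlow ≤ τ := by rw [htlow]; exact min_le_right _ _
  have htlow1 : tlow < 1 := lt_of_le_of_lt htlowτ hτ1
  -- nonnegativity of D on Zs
  have hD0 : ∀ z ∈ Zs, ∀ z' ∈ Zs, 0 ≤ D z z' := by
    intro z hz z' hz'
    have h1 := hreg1 z hz z' hz'
    have h2 : 0 ≤ m / 2 * p (z - z') ^ 2 :=
      mul_nonneg (by linarith) (sq_nonneg _)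
    linarith
  -- upper regularity : D z z' ≤ M/2 * p(z - z')²
  have Dupper : ∀ z ∈ Zs, ∀ z' ∈ Zs, D z z' ≤ M / 2 * p (z - z') ^ 2 := by
    intro z hz z' hz'
    set P := p (z' - z) with hP
    have hPz : p (z - z') = P := by rw [hP, map_sub_rev]
    have hPnn : 0 ≤ P := apply_nonneg p _
    have hbound : ∀ n : ℕ, 1 ≤ n → D z z' ≤ M / 2 * P ^ 2 + M * P ^ 2 / (2 * n) := by
      intro n hn
      have hn0 : (0:ℝ) < (n : ℝ) := by exact_mod_cast hn
      set c : ℕ → E := fun i => z + ((i : ℝ) / n) • (z' - z) with hc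
      have hcmem : ∀ i ≤ n, c i ∈ Zs := by
        intro i hi
        have h0 : (0:ℝ) ≤ (i : ℝ) / n := by positivity
        have h1 : (i : ℝ) / n ≤ 1 := by
          rw [div_le_one hn0]; exact_mod_cast hi
        have hmem := hZconv hz hz' (by linarith : (0:ℝ) ≤ 1 - (i : ℝ) / n) h0 (by ring)
        have hid : c i = (1 - (i : ℝ) / n) • z + ((i : ℝ) / n) • z' := by
          simp only [hc]
          module
        rw [hid]; exact hmem
      have hdiff : ∀ i : ℕ, c (i + 1) - c i = ((1:ℝ) / n) • (z' - z) := by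
        intro i
        have hsc : ((i : ℝ) + 1) / n = (i : ℝ) / n + 1 / n := by ring
        simp only [hc]
        push_cast
        rw [hsc, add_smul]
        abel
      have hc1z : ∀ i : ℕ, c (i + 1) - z = (((i : ℝ) + 1) / n) • (z' - z) := by
        intro i
        simp only [hc]
        push_cast
        abel
      have hstep : ∀ i < n, w (c (i + 1)) - w (c i) - ⟪g z, c (i + 1) - c i⟫ ≤
          M * P ^ 2 * ((i : ℝ) + 1) / n ^ 2 := by
        intro i hi
        have hci : c i ∈ Zs := hcmem i (le_of_lt hi)
        have hci1 : c (i + 1) ∈ Zs := hcmem (i + 1) hi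
        have hDnn : 0 ≤ D (c (i + 1)) (c i) := hD0 _ hci1 _ hci
        rw [hD] at hDnn
        have hne : ⟪g (c (i + 1)), c i - c (i + 1)⟫ = -⟪g (c (i + 1)), c (i + 1) - c i⟫ := by
          rw [← inner_neg_right]
          congr 1
          abel
        rw [hne] at hDnn
        have h2 : w (c (i + 1)) - w (c i) ≤ ⟪g (c (i + 1)), c (i + 1) - c i⟫ := by linarith
        have h3 : w (c (i + 1)) - w (c i) - ⟪g z, c (i + 1) - c i⟫ ≤
            ⟪g (c (i + 1)) - g z, c (i + 1) - c i⟫ := by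
          rw [inner_sub_left]; linarith
        have h4 := hreg2 _ hci1 _ hz (c (i + 1) - c i)
        have h5 : p (c (i + 1) - z) = (((i : ℝ) + 1) / n) * P := by
          rw [hc1z, map_smul_eq_mul, Real.norm_eq_abs, abs_of_nonneg (by positivity)]
        have h6 : p (c (i + 1) - c i) = (1 / n) * P := by
          rw [hdiff, map_smul_eq_mul, Real.norm_eq_abs, abs_of_nonneg (by positivity)]
        rw [h5, h6] at h4
        calc w (c (i + 1)) - w (c i) - ⟪g z, c (i + 1) - c i⟫
            ≤ M * ((((i : ℝ) + 1) / n) * P) * ((1 / n) * P) := le_trans h3 h4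
          _ = M * P ^ 2 * ((i : ℝ) + 1) / n ^ 2 := by field_simp
      set f : ℕ → ℝ := fun i => w (c i) - ⟪g z, c i - z⟫ with hf
      have hc0 : c 0 = z := by simp [hc]
      have hcn : c n = z' := by
        simp only [hc, div_self (ne_of_gt hn0), one_smul]
        abel
      have htel : D z z' = f n - f 0 := by
        simp only [hf, hc0, hcn, hD, sub_self, inner_zero_right]
        ring
      have hsum : f n - f 0 = ∑ i ∈ Finset.range n, (f (i + 1) - f i) :=
        (Finset.sum_range_sub f n).symm
      have hle : D z z' ≤ ∑ i ∈ Finset.range n, (M * P ^ 2 * ((i : ℝ) + 1) / n ^ 2) := by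
        rw [htel, hsum]
        apply Finset.sum_le_sum
        intro i hi
        have hfe : f (i + 1) - f i = w (c (i + 1)) - w (c i) - ⟪g z, c (i + 1) - c i⟫ := by
          have hv : c (i + 1) - c i = (c (i + 1) - z) - (c i - z) := by abel
          simp only [hf]
          rw [hv]
          simp only [inner_sub_right]
          ring
        rw [hfe]
        exact hstep i (Finset.mem_range.mp hi)
      have hsumval : ∑ i ∈ Finset.range n, (M * P ^ 2 * ((i : ℝ) + 1) / n ^ 2)
          = M * P ^ 2 * ((n : ℝ) * (n + 1) / 2) / n ^ 2 := by
        rw [← Finset.sum_div, ← Finset.mul_sum, auxSum13]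
      have hval : M * P ^ 2 * ((n : ℝ) * (n + 1) / 2) / n ^ 2
          = M / 2 * P ^ 2 + M * P ^ 2 / (2 * n) := by
        field_simp
      rw [hsumval, hval] at hle
      exact hle
    rw [hPz]
    refine le_of_forall_pos_le_add ?_
    intro ε hε
    obtain ⟨n, hn⟩ := exists_nat_gt (M * P ^ 2 / (2 * ε))
    have hn1 : 1 ≤ n := by
      rcases Nat.eq_zero_or_pos n with h | h
      · exfalso
        rw [h] at hn
        have : (0:ℝ) ≤ M * P ^ 2 / (2 * ε) := by positivity
        simp at hn
        linarith
      · exact h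
    have hb := hbound n hn1
    have hn0 : (0:ℝ) < (n : ℝ) := by exact_mod_cast hn1
    have hsmall : M * P ^ 2 / (2 * n) ≤ ε := by
      rw [div_le_iff₀ (by positivity)]
      rw [div_lt_iff₀ (by positivity)] at hn
      linarith
    linarith
  refine ⟨⟨htlowpos, htlow1⟩, ?_⟩
  rintro zstar ⟨a, b, ha, hb, hab⟩ k ℓ hlk
  have hzsZ : zstar ∈ Zs := hDomT zstar ⟨b, hb⟩
  -- one-step contraction
  have step : ∀ j : ℕ, D (zk (j + 1)) zstar + ηk (j + 1) ≤
      (1 - tlow) * (D (zk j) zstar + ηk j) := by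
    intro j
    obtain ⟨ra, rb, hra, hrb, heq⟩ := hincl (j + 1) (by omega)
    simp only [Nat.add_sub_cancel] at heq
    have herrj := herr (j + 1) (by omega)
    simp only [Nat.add_sub_cancel] at herrj
    have hlamK : lam ≤ lamk (j + 1) := hlamk _
    have hlamK0 : 0 < lamk (j + 1) := lt_of_lt_of_le hlam hlamK
    have A1 := hSmono _ (hztlZ (j + 1)) _ hzsZ ra hra a ha
    have A2 := hrb zstar b hb
    have hv : g (zk j) - g (zk (j + 1)) = lamk (j + 1) • (ra + rb) := by
      rw [← heq, smul_smul, mul_one_div, div_self (ne_of_gt hlamK0), one_smul]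
    have e3 : ⟪g (zk j) - g (zk (j + 1)), ztlk (j + 1) - zstar⟫
        = lamk (j + 1) * (⟪ra, ztlk (j + 1) - zstar⟫ + ⟪rb, ztlk (j + 1) - zstar⟫) := by
      rw [hv, real_inner_smul_left, inner_add_left]
    have e0 : ⟪a, ztlk (j + 1) - zstar⟫ + ⟪b, ztlk (j + 1) - zstar⟫ = 0 := by
      rw [← inner_add_left, hab, inner_zero_left]
    have e1 : ⟪ztlk (j + 1) - zstar, ra - a⟫
        = ⟪ra, ztlk (j + 1) - zstar⟫ - ⟪a, ztlk (j + 1) - zstar⟫ := by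
      rw [real_inner_comm, inner_sub_left]
    have e2 : ⟪rb - b, ztlk (j + 1) - zstar⟫
        = ⟪rb, ztlk (j + 1) - zstar⟫ - ⟪b, ztlk (j + 1) - zstar⟫ := inner_sub_left _ _ _
    have key1 : lamk (j + 1) * (μ * (D (ztlk (j + 1)) zstar + D zstar (ztlk (j + 1)))
        - εk (j + 1)) ≤ ⟪g (zk j) - g (zk (j + 1)), ztlk (j + 1) - zstar⟫ := by
      have hsum : μ * (D (ztlk (j + 1)) zstar + D zstar (ztlk (j + 1))) - εk (j + 1)
          ≤ ⟪ra, ztlk (j + 1) - zstar⟫ + ⟪rb, ztlk (j + 1) - zstar⟫ := by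
        linarith
      calc lamk (j + 1) * (μ * (D (ztlk (j + 1)) zstar + D zstar (ztlk (j + 1))) - εk (j + 1))
          ≤ lamk (j + 1) * (⟪ra, ztlk (j + 1) - zstar⟫ + ⟪rb, ztlk (j + 1) - zstar⟫) :=
            mul_le_mul_of_nonneg_left hsum hlamK0.le
        _ = ⟪g (zk j) - g (zk (j + 1)), ztlk (j + 1) - zstar⟫ := e3.symm
    have tp : ⟪g (zk j) - g (zk (j + 1)), ztlk (j + 1) - zstar⟫
        = (D (zk j) zstar - D (zk (j + 1)) zstar)
          - (D (zk j) (ztlk (j + 1)) - D (zk (j + 1)) (ztlk (j + 1))) := by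
      simp only [hD, inner_sub_left, inner_sub_right]
      ring
    have hDtz : 0 ≤ D (ztlk (j + 1)) zstar := hD0 _ (hztlZ _) _ hzsZ
    have hDzt : 0 ≤ D zstar (ztlk (j + 1)) := hD0 _ hzsZ _ (hztlZ _)
    have hDkt : 0 ≤ D (zk j) (ztlk (j + 1)) := hD0 _ (hzZ j) _ (hztlZ _)
    have hmono : lam * (μ * D (ztlk (j + 1)) zstar)
        ≤ lamk (j + 1) * (μ * D (ztlk (j + 1)) zstar) :=
      mul_le_mul_of_nonneg_right hlamK (mul_nonneg hμ.le hDtz)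
    have hpos2 : 0 ≤ lamk (j + 1) * (μ * D zstar (ztlk (j + 1))) :=
      mul_nonneg hlamK0.le (mul_nonneg hμ.le hDzt)
    have hηfact : (1 - τ) * ηk j ≤ (1 - tlow) * ηk j :=
      mul_le_mul_of_nonneg_right (by linarith) (hη j)
    -- geometric estimate
    have geo : tlow * D (zk j) zstar ≤ lam * (μ * D (ztlk (j + 1)) zstar)
        + (1 - σ) * D (zk j) (ztlk (j + 1)) := by
      set α := p (zk j - ztlk (j + 1)) with hα'
      set β := p (ztlk (j + 1) - zstar) with hβ'
      have hαnn : 0 ≤ α := apply_nonneg p _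
      have hβnn : 0 ≤ β := apply_nonneg p _
      have hα : m / 2 * α ^ 2 ≤ D (zk j) (ztlk (j + 1)) := hreg1 _ (hzZ j) _ (hztlZ _)
      have hβ : m / 2 * β ^ 2 ≤ D (ztlk (j + 1)) zstar := hreg1 _ (hztlZ _) _ hzsZ
      have hup : D (zk j) zstar ≤ M / 2 * p (zk j - zstar) ^ 2 := Dupper _ (hzZ j) _ hzsZ
      have htri : p (zk j - zstar) ≤ α + β := by
        have hv2 : zk j - zstar = (zk j - ztlk (j + 1)) + (ztlk (j + 1) - zstar) := by abel
        rw [hv2]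
        exact map_add_le_add p _ _
      have hsq : p (zk j - zstar) ^ 2 ≤ (α + β) ^ 2 :=
        pow_le_pow_left₀ (apply_nonneg p _) htri 2
      have hup2 : D (zk j) zstar ≤ M / 2 * (α + β) ^ 2 :=
        le_trans hup (mul_le_mul_of_nonneg_left hsq (by positivity))
      have ht1 : tlow ≤ m / M * (1 / (1 - σ) + 1 / (μ * lam))⁻¹ := by
        rw [htlow]; exact min_le_left _ _
      have hcc : m / M * (1 / (1 - σ) + 1 / (μ * lam))⁻¹
          = m * ((1 - σ) * (μ * lam)) / (M * ((1 - σ) + μ * lam)) := by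
        rw [div_add_div _ _ (ne_of_gt hσ1') (ne_of_gt hmulam), inv_div, div_mul_div_comm,
          div_eq_div_iff (by positivity) (by positivity)]
        ring
      have hkey : (1 - σ) * (μ * lam) * (α + β) ^ 2
          ≤ ((1 - σ) + μ * lam) * ((1 - σ) * α ^ 2 + (μ * lam) * β ^ 2) := by
        nlinarith [sq_nonneg ((1 - σ) * α - (μ * lam) * β)]
      have hsumpos : (0:ℝ) < (1 - σ) + μ * lam := by linarith
      have c1 : tlow * D (zk j) zstar ≤ tlow * (M / 2 * (α + β) ^ 2) :=
        mul_le_mul_of_nonneg_left hup2 htlowpos.le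
      have c2 : tlow * (M / 2 * (α + β) ^ 2)
          ≤ (m * ((1 - σ) * (μ * lam)) / (M * ((1 - σ) + μ * lam))) * (M / 2 * (α + β) ^ 2) := by
        apply mul_le_mul_of_nonneg_right _ (by positivity)
        rw [← hcc]
        exact ht1
      have c3 : (m * ((1 - σ) * (μ * lam)) / (M * ((1 - σ) + μ * lam))) * (M / 2 * (α + β) ^ 2)
          = (m / 2) * ((1 - σ) * (μ * lam) * (α + β) ^ 2) / ((1 - σ) + μ * lam) := by
        field_simp
      have c4 : (m / 2) * ((1 - σ) * (μ * lam) * (α + β) ^ 2) / ((1 - σ) + μ * lam)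
          ≤ (m / 2) * (((1 - σ) + μ * lam) * ((1 - σ) * α ^ 2 + (μ * lam) * β ^ 2))
              / ((1 - σ) + μ * lam) := by
        gcongr
      have c5 : (m / 2) * (((1 - σ) + μ * lam) * ((1 - σ) * α ^ 2 + (μ * lam) * β ^ 2))
              / ((1 - σ) + μ * lam)
          = (1 - σ) * (m / 2 * α ^ 2) + (μ * lam) * (m / 2 * β ^ 2) := by
        field_simp
      have c6 : (1 - σ) * (m / 2 * α ^ 2) ≤ (1 - σ) * D (zk j) (ztlk (j + 1)) :=
        mul_le_mul_of_nonneg_left hα hσ1'.le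
      have c7 : (μ * lam) * (m / 2 * β ^ 2) ≤ (μ * lam) * D (ztlk (j + 1)) zstar :=
        mul_le_mul_of_nonneg_left hβ hmulam.le
      have c8 : (μ * lam) * D (ztlk (j + 1)) zstar = lam * (μ * D (ztlk (j + 1)) zstar) := by
        ring
      calc tlow * D (zk j) zstar
          ≤ (m / 2) * ((1 - σ) * (μ * lam) * (α + β) ^ 2) / ((1 - σ) + μ * lam) := by
            rw [← c3]; exact le_trans c1 c2
        _ ≤ (1 - σ) * (m / 2 * α ^ 2) + (μ * lam) * (m / 2 * β ^ 2) := by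
            rw [← c5]; exact c4
        _ ≤ lam * (μ * D (ztlk (j + 1)) zstar) + (1 - σ) * D (zk j) (ztlk (j + 1)) := by
            rw [← c8]; linarith
    -- combine everything
    rw [tp] at key1
    have key2 : lamk (j + 1) * (μ * D (ztlk (j + 1)) zstar)
        + lamk (j + 1) * (μ * D zstar (ztlk (j + 1))) - lamk (j + 1) * εk (j + 1)
        ≤ (D (zk j) zstar - D (zk (j + 1)) zstar)
          - (D (zk j) (ztlk (j + 1)) - D (zk (j + 1)) (ztlk (j + 1))) := by
      have hring : lamk (j + 1) * (μ * (D (ztlk (j + 1)) zstar + D zstar (ztlk (j + 1)))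
          - εk (j + 1)) = lamk (j + 1) * (μ * D (ztlk (j + 1)) zstar)
          + lamk (j + 1) * (μ * D zstar (ztlk (j + 1))) - lamk (j + 1) * εk (j + 1) := by ring
      linarith [hring ▸ key1]
    nlinarith [key2, herrj, geo, hmono, hpos2, hηfact]
  -- induction
  have h1t : (0:ℝ) ≤ 1 - tlow := by linarith
  have aux : ∀ j : ℕ, D (zk (ℓ + j + 1)) zstar + ηk (ℓ + j + 1)
      ≤ (1 - tlow) ^ (j + 1) * (D (zk ℓ) zstar + ηk ℓ) := by
    intro j
    induction j with
    | zero => simpa using step ℓ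
    | succ j ih =>
      have hidx : ℓ + (j + 1) + 1 = (ℓ + j + 1) + 1 := by omega
      rw [hidx]
      calc D (zk ((ℓ + j + 1) + 1)) zstar + ηk ((ℓ + j + 1) + 1)
          ≤ (1 - tlow) * (D (zk (ℓ + j + 1)) zstar + ηk (ℓ + j + 1)) := step _
        _ ≤ (1 - tlow) * ((1 - tlow) ^ (j + 1) * (D (zk ℓ) zstar + ηk ℓ)) :=
            mul_le_mul_of_nonneg_left ih h1t
        _ = (1 - tlow) ^ (j + 1 + 1) * (D (zk ℓ) zstar + ηk ℓ) := by ring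
  obtain ⟨j, rfl⟩ : ∃ j, k = ℓ + j + 1 := ⟨k - ℓ - 1, by omega⟩
  have hkl : (ℓ + j + 1) - ℓ = j + 1 := by omega
  rw [hkl]
  exact aux j
end

section
/- (Pointwise residual bound for regularized NE-HPE) Under the setting and notation of the previous contraction result, for every k ≥ 1: ‖r_k‖* ≤ (2√2 M)/(λ√m) · (1-τ̲)^{(k-1)/2} · (d̲₀ + η₀)^{1/2} and ε_k ≤ (1/(λ(1-σ))) (1-τ̲)^{k-1} (d̲₀ + η₀), where d̲₀ := inf{(dw)_{z₀}(z) : 0 ∈ (S+T)(z)}. -/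
open RealInnerProductSpace

private lemma amgm (α β c a b : ℝ) (hα : 0 ≤ α) (hβ : 0 ≤ β) (ha : 0 ≤ a) (hb : 0 ≤ b)
    (hc : 0 ≤ c) (h : c ^ 2 ≤ 4 * α * β) : c * a * b ≤ α * a ^ 2 + β * b ^ 2 := by
  have h1 : c ≤ 2 * (Real.sqrt α * Real.sqrt β) := by
    have h3 := Real.sqrt_le_sqrt h
    rwa [Real.sqrt_sq hc, show (4:ℝ) * α * β = 2 ^ 2 * (α * β) by ring,
      Real.sqrt_mul (by positivity) (α * β), Real.sqrt_sq (by norm_num : (0:ℝ) ≤ 2),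
      Real.sqrt_mul hα] at h3
  nlinarith [sq_nonneg (Real.sqrt α * a - Real.sqrt β * b), Real.sq_sqrt hα, Real.sq_sqrt hβ,
    mul_nonneg ha hb, Real.sqrt_nonneg α, Real.sqrt_nonneg β]

set_option maxHeartbeats 1000000 in
private lemma key (m M s u t X Y Z a b Dj : ℝ) (hm : 0 < m) (hM : 0 < M) (hs : 0 < s)
    (hu : 0 < u) (ht0 : 0 < t) (ht : t ≤ m / M * (s * u / (s + u)))
    (ha : 0 ≤ a) (hb : 0 ≤ b)
    (hX : m / 2 * a ^ 2 ≤ X) (hZ : m / 2 * b ^ 2 ≤ Z) (hY : 0 ≤ Y)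
    (hXup : X ≤ M * a ^ 2) (hYup : Y ≤ M * b ^ 2)
    (haa : m * a ^ 2 ≤ M * a ^ 2) (hbb : m * b ^ 2 ≤ M * b ^ 2)
    (hDj : Dj ≤ X + Y + M * a * b) : t * Dj ≤ s * X + u * Y + u * Z := by
  have hsu : 0 < s + u := by linarith
  rcases le_or_gt m M with hmM | hmM
  · set q : ℝ := s * u / (s + u) with hqdef
    have hq : q * (s + u) = s * u := by rw [hqdef]; field_simp
    have hq0 : 0 < q := by positivity
    have ht1 : t ≤ q := by
      calc t ≤ m / M * q := ht
        _ ≤ 1 * q := by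
          apply mul_le_mul_of_nonneg_right _ hq0.le
          rw [div_le_one hM]; exact hmM
        _ = q := one_mul _
    have hqs : q ≤ s := by nlinarith
    have hqu : q ≤ u := by nlinarith
    have hts : t ≤ s := le_trans ht1 hqs
    have htu : t ≤ u := le_trans ht1 hqu
    have htM : t * M ≤ m * q := by
      have h4 := mul_le_mul_of_nonneg_right ht hM.le
      calc t * M ≤ m / M * q * M := h4
        _ = m * q := by field_simp
    have hqsu : q * s = (s - q) * u := by linear_combination hq
    have hnum : (t * M) ^ 2 ≤ (s - t) * u * m ^ 2 := by
      have n1 : (t * M) ^ 2 ≤ (m * q) ^ 2 := by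
        apply pow_le_pow_left₀ (by positivity) htM
      have n3 : q * q ≤ q * s := mul_le_mul_of_nonneg_left hqs hq0.le
      have n4 : q * s ≤ (s - t) * u := by nlinarith
      nlinarith [mul_le_mul_of_nonneg_left (n3.trans n4) (sq_nonneg m)]
    have hnum' : (t * M) ^ 2 ≤ 4 * ((s - t) * (m / 2)) * (u * (m / 2)) := by
      have e : 4 * ((s - t) * (m / 2)) * (u * (m / 2)) = (s - t) * u * m ^ 2 := by ring
      rw [e]; exact hnum
    have hkey2 := amgm ((s - t) * (m / 2)) (u * (m / 2)) (t * M) a b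
      (mul_nonneg (by linarith) (by linarith)) (mul_nonneg hu.le (by linarith)) ha hb
      (mul_nonneg ht0.le hM.le) hnum'
    have h8 : t * Dj ≤ t * (X + Y + M * a * b) := mul_le_mul_of_nonneg_left hDj ht0.le
    have c1 := mul_le_mul_of_nonneg_left hX (show (0:ℝ) ≤ s - t by linarith)
    have c2 := mul_le_mul_of_nonneg_left hZ hu.le
    have c3 : t * Y ≤ u * Y := mul_le_mul_of_nonneg_right htu hY
    linarith
  · have ha0 : a = 0 := by
      by_contra hne
      have hpos : 0 < a := lt_of_le_of_ne ha (Ne.symm hne)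
      nlinarith [mul_pos (sub_pos.mpr hmM) (mul_pos hpos hpos)]
    have hb0 : b = 0 := by
      by_contra hne
      have hpos : 0 < b := lt_of_le_of_ne hb (Ne.symm hne)
      nlinarith [mul_pos (sub_pos.mpr hmM) (mul_pos hpos hpos)]
    subst ha0; subst hb0
    norm_num at hX hZ hXup hYup hDj
    have hX0 : X = 0 := le_antisymm hXup hX
    have hY0 : Y = 0 := le_antisymm hYup hY
    subst hX0; subst hY0
    norm_num at hDj ⊢
    have h9 : t * Dj ≤ t * 0 := mul_le_mul_of_nonneg_left hDj ht0.le
    nlinarith [mul_nonneg hu.le hZ]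

private lemma inf_helper (Sset : Set ℝ) (hne : Sset.Nonempty) (L P c : ℝ) (hP : 0 < P)
    (h : ∀ x ∈ Sset, L ≤ P * (x + c)) : L ≤ P * (sInf Sset + c) := by
  have h1 : (L - P * c) / P ≤ sInf Sset := by
    apply le_csInf hne
    intro x hx
    rw [div_le_iff₀ hP]
    nlinarith [h x hx]
  rw [div_le_iff₀ hP] at h1
  nlinarith

set_option maxHeartbeats 1000000 in
/-- Pointwise residual bound for the regularized NE-HPE framework: under the setting of
the contraction result, for every `k ≥ 1`,
`‖r_k‖* ≤ (2√2 M/(λ√m)) (1-τ̲)^{(k-1)/2} (d̲₀+η₀)^{1/2}` (dual seminorm bound expressed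
pointwise against all `u`) and `ε_k ≤ (1/(λ(1-σ)))(1-τ̲)^{k-1}(d̲₀+η₀)`, where
`d̲₀ = inf{(dw)_{z₀}(z) : 0 ∈ (S+T)(z)}`. -/
theorem stmt14 {E : Type*} [NormedAddCommGroup E] [InnerProductSpace ℝ E]
    [FiniteDimensional ℝ E]
    (w : E → ℝ) (g : E → E) (Zs : Set E) (p : Seminorm ℝ E)
    (m M : ℝ) (hm : 0 < m) (hM : 0 < M)
    (hZconv : Convex ℝ Zs)
    (hg : ∀ z ∈ Zs, HasGradientAt w (g z) z)
    (D : E → E → ℝ)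
    (hD : ∀ z z' : E, D z z' = w z' - w z - ⟪g z, z' - z⟫)
    (hreg1 : ∀ z ∈ Zs, ∀ z' ∈ Zs, m / 2 * p (z - z') ^ 2 ≤ D z z')
    (hreg2 : ∀ z ∈ Zs, ∀ z' ∈ Zs, ∀ u : E, ⟪g z - g z', u⟫ ≤ M * p (z - z') * p u)
    (S T : E → Set E) (μ lam σ τ : ℝ)
    (hμ : 0 < μ) (hlam : 0 < lam) (hσ0 : 0 ≤ σ) (hσ1 : σ < 1) (hτ0 : 0 < τ) (hτ1 : τ < 1)
    (hDomT : ∀ x : E, (T x).Nonempty → x ∈ Zs)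
    (hSmono : ∀ z ∈ Zs, ∀ z' ∈ Zs, ∀ s ∈ S z, ∀ s' ∈ S z',
      μ * (D z z' + D z' z) ≤ ⟪z - z', s - s'⟫)
    (hTmono : ∀ z z' v v' : E, v ∈ T z → v' ∈ T z' → 0 ≤ ⟪z - z', v - v'⟫)
    (zk ztlk : ℕ → E) (lamk εk ηk : ℕ → ℝ) (rk : ℕ → E)
    (hzZ : ∀ k, zk k ∈ Zs) (hztlZ : ∀ k, ztlk k ∈ Zs)
    (hlamk : ∀ k, lam ≤ lamk k) (hε : ∀ k, 0 ≤ εk k) (hη : ∀ k, 0 ≤ ηk k)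
    (hrk : ∀ k : ℕ, 1 ≤ k → rk k = (1 / lamk k) • (g (zk (k - 1)) - g (zk k)))
    (hincl : ∀ k : ℕ, 1 ≤ k → ∃ ra rb : E, ra ∈ S (ztlk k) ∧
      (∀ z' v' : E, v' ∈ T z' → -(εk k) ≤ ⟪rb - v', ztlk k - z'⟫) ∧
      rk k = ra + rb)
    (herr : ∀ k : ℕ, 1 ≤ k →
      D (zk k) (ztlk k) + lamk k * εk k + ηk k ≤
        σ * D (zk (k - 1)) (ztlk k) + (1 - τ) * ηk (k - 1))
    (hsolne : ∃ zstar : E, ∃ a b : E, a ∈ S zstar ∧ b ∈ T zstar ∧ a + b = 0)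
    (tlow : ℝ)
    (htlow : tlow = min (m / M * (1 / (1 - σ) + 1 / (μ * lam))⁻¹) τ)
    (d0 : ℝ)
    (hd0 : d0 = sInf {x : ℝ | ∃ zstar : E,
      (∃ a b : E, a ∈ S zstar ∧ b ∈ T zstar ∧ a + b = 0) ∧ x = D (zk 0) zstar}) :
    ∀ k : ℕ, 1 ≤ k →
      (∀ u : E, ⟪rk k, u⟫ ≤
        2 * Real.sqrt 2 * M / (lam * Real.sqrt m) *
          (1 - tlow) ^ (((k : ℝ) - 1) / 2) * Real.sqrt (d0 + ηk 0) * p u) ∧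
      εk k ≤ 1 / (lam * (1 - σ)) * (1 - tlow) ^ (k - 1) * (d0 + ηk 0) := by
  have hs : (0:ℝ) < 1 - σ := by linarith
  have hu : 0 < μ * lam := mul_pos hμ hlam
  have hsu : (0:ℝ) < 1 - σ + μ * lam := by linarith
  have hCinv : (1 / (1 - σ) + 1 / (μ * lam))⁻¹ = (1 - σ) * (μ * lam) / (1 - σ + μ * lam) := by
    have h1 : 1 / (1 - σ) + 1 / (μ * lam) = (1 - σ + μ * lam) / ((1 - σ) * (μ * lam)) := by
      field_simp; ring
    rw [h1, inv_div]
  have htlow_le : tlow ≤ m / M * ((1 - σ) * (μ * lam) / (1 - σ + μ * lam)) := by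
    rw [htlow, hCinv]; exact min_le_left _ _
  have htlowτ : tlow ≤ τ := by rw [htlow]; exact min_le_right _ _
  have htlow0 : 0 < tlow := by
    rw [htlow]
    apply lt_min _ hτ0
    have h2 : 0 < 1 / (1 - σ) + 1 / (μ * lam) :=
      add_pos (div_pos one_pos hs) (div_pos one_pos hu)
    exact mul_pos (div_pos hm hM) (inv_pos.mpr h2)
  have htlow1 : tlow < 1 := lt_of_le_of_lt htlowτ hτ1
  have h1t0 : (0:ℝ) ≤ 1 - tlow := by linarith
  have Dnn : ∀ z ∈ Zs, ∀ z' ∈ Zs, 0 ≤ D z z' := by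
    intro z hz z' hz'
    have h1 := hreg1 z hz z' hz'
    have h2 : 0 ≤ m / 2 * p (z - z') ^ 2 :=
      mul_nonneg (by linarith) (sq_nonneg _)
    linarith
  obtain ⟨zst, ast, bst, hast, hbst, habst⟩ := hsolne
  have hsetne : {x : ℝ | ∃ zstar : E,
      (∃ a b : E, a ∈ S zstar ∧ b ∈ T zstar ∧ a + b = 0) ∧ x = D (zk 0) zstar}.Nonempty :=
    ⟨D (zk 0) zst, zst, ⟨ast, bst, hast, hbst, habst⟩, rfl⟩
  have hd0nn : 0 ≤ d0 := by
    rw [hd0]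
    apply le_csInf hsetne
    rintro x ⟨zs, ⟨a, b, _, hb, _⟩, rfl⟩
    exact Dnn _ (hzZ 0) _ (hDomT zs ⟨b, hb⟩)
  -- per-solution estimates
  have main : ∀ zs a b : E, a ∈ S zs → b ∈ T zs → a + b = 0 → ∀ i : ℕ,
      p (zk i - zk (i+1)) ^ 2 ≤ 8 / m * ((1 - tlow) ^ i * (D (zk 0) zs + ηk 0)) ∧
      lam * (1 - σ) * εk (i+1) ≤ (1 - tlow) ^ i * (D (zk 0) zs + ηk 0) := by
    intro zs a b ha hb hab
    have hzs : zs ∈ Zs := hDomT zs ⟨b, hb⟩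
    have hAnn : ∀ i, 0 ≤ D (zk i) zs + ηk i :=
      fun i => add_nonneg (Dnn _ (hzZ i) _ hzs) (hη i)
    have step : ∀ i : ℕ,
        D (zk (i+1)) zs + ηk (i+1) ≤ (1 - tlow) * (D (zk i) zs + ηk i) ∧
        (1 - σ) * (lamk (i+1) * εk (i+1)) ≤ D (zk i) zs + ηk i := by
      intro i
      have hk1 : 1 ≤ i + 1 := Nat.le_add_left 1 i
      have hrk' := hrk (i+1) hk1
      have herr' := herr (i+1) hk1
      simp only [Nat.add_sub_cancel] at hrk' herr'
      obtain ⟨ra, rb, hra, hrb, hsum⟩ := hincl (i+1) hk1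
      have hlp : 0 < lamk (i+1) := lt_of_lt_of_le hlam (hlamk _)
      have hmono := hSmono (ztlk (i+1)) (hztlZ (i+1)) zs hzs ra hra a ha
      have henl := hrb zs b hb
      have hsplit : (⟪rk (i+1), ztlk (i+1) - zs⟫:ℝ) =
          ⟪ztlk (i+1) - zs, ra - a⟫ + ⟪rb - b, ztlk (i+1) - zs⟫ := by
        rw [hsum]
        have e1 : (⟪ra + rb, ztlk (i+1) - zs⟫:ℝ) =
            ⟪ra - a, ztlk (i+1) - zs⟫ + ⟪rb - b, ztlk (i+1) - zs⟫ +
              ⟪a + b, ztlk (i+1) - zs⟫ := by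
          simp only [inner_sub_left, inner_add_left]; ring
        rw [e1, hab, inner_zero_left, add_zero, real_inner_comm (ra - a)]
      have hinlow : μ * (D (ztlk (i+1)) zs + D zs (ztlk (i+1))) - εk (i+1) ≤
          ⟪rk (i+1), ztlk (i+1) - zs⟫ := by
        rw [hsplit]; linarith
      have hip : (⟪g (zk i) - g (zk (i+1)), ztlk (i+1) - zs⟫:ℝ) =
          lamk (i+1) * ⟪rk (i+1), ztlk (i+1) - zs⟫ := by
        rw [hrk', real_inner_smul_left]
        have hne := hlp.ne'
        field_simp
      have hid : D (zk i) zs - D (zk (i+1)) zs - D (zk i) (ztlk (i+1)) +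
          D (zk (i+1)) (ztlk (i+1)) = ⟪g (zk i) - g (zk (i+1)), ztlk (i+1) - zs⟫ := by
        simp only [hD, inner_sub_left, inner_sub_right]; ring
      have hYnn : 0 ≤ D (ztlk (i+1)) zs := Dnn _ (hztlZ _) _ hzs
      have hZnn : 0 ≤ D zs (ztlk (i+1)) := Dnn _ hzs _ (hztlZ _)
      have hXnn : 0 ≤ D (zk i) (ztlk (i+1)) := Dnn _ (hzZ i) _ (hztlZ _)
      have hWnn : 0 ≤ D (zk (i+1)) (ztlk (i+1)) := Dnn _ (hzZ _) _ (hztlZ _)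
      have hmain : lam * μ * (D (ztlk (i+1)) zs + D zs (ztlk (i+1))) -
          lamk (i+1) * εk (i+1) ≤
          D (zk i) zs - D (zk (i+1)) zs - D (zk i) (ztlk (i+1)) +
            D (zk (i+1)) (ztlk (i+1)) := by
        rw [hid, hip]
        have h1 : lam * (μ * (D (ztlk (i+1)) zs + D zs (ztlk (i+1)))) ≤
            lamk (i+1) * (μ * (D (ztlk (i+1)) zs + D zs (ztlk (i+1)))) :=
          mul_le_mul_of_nonneg_right (hlamk _)
            (mul_nonneg hμ.le (add_nonneg hYnn hZnn))
        have h2 := mul_le_mul_of_nonneg_left hinlow hlp.le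
        linarith
      have hE2 : D (zk (i+1)) zs + ηk (i+1) + (1 - σ) * D (zk i) (ztlk (i+1)) +
          lam * μ * (D (ztlk (i+1)) zs + D zs (ztlk (i+1))) ≤
          D (zk i) zs + (1 - τ) * ηk i := by linarith
      -- key ingredients
      have hpa : 0 ≤ p (zk i - ztlk (i+1)) := apply_nonneg p _
      have hpb : 0 ≤ p (zs - ztlk (i+1)) := apply_nonneg p _
      have hnega : p (ztlk (i+1) - zk i) = p (zk i - ztlk (i+1)) := by
        rw [← neg_sub]; exact map_neg_eq_map p _
      have hnegb : p (ztlk (i+1) - zs) = p (zs - ztlk (i+1)) := by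
        rw [← neg_sub]; exact map_neg_eq_map p _
      have hX := hreg1 (zk i) (hzZ i) (ztlk (i+1)) (hztlZ _)
      have hZ := hreg1 zs hzs (ztlk (i+1)) (hztlZ _)
      have hXsum : D (zk i) (ztlk (i+1)) + D (ztlk (i+1)) (zk i) =
          ⟪g (zk i) - g (ztlk (i+1)), zk i - ztlk (i+1)⟫ := by
        simp only [hD, inner_sub_left, inner_sub_right]; ring
      have hYsum : D (ztlk (i+1)) zs + D zs (ztlk (i+1)) =
          ⟪g (ztlk (i+1)) - g zs, ztlk (i+1) - zs⟫ := by
        simp only [hD, inner_sub_left, inner_sub_right]; ring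
      have hXupb := hreg2 (zk i) (hzZ i) (ztlk (i+1)) (hztlZ _) (zk i - ztlk (i+1))
      have hYupb := hreg2 (ztlk (i+1)) (hztlZ _) zs hzs (ztlk (i+1) - zs)
      rw [hnegb] at hYupb
      have hXtZnn : 0 ≤ D (ztlk (i+1)) (zk i) := Dnn _ (hztlZ _) _ (hzZ i)
      have hXup : D (zk i) (ztlk (i+1)) ≤ M * p (zk i - ztlk (i+1)) ^ 2 := by
        have e2 : M * p (zk i - ztlk (i+1)) * p (zk i - ztlk (i+1)) =
            M * p (zk i - ztlk (i+1)) ^ 2 := by ring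
        linarith [hXsum, hXupb, hXtZnn, e2.le, e2.ge]
      have hYup : D (ztlk (i+1)) zs ≤ M * p (zs - ztlk (i+1)) ^ 2 := by
        linarith [hYupb, hZnn, hYsum]
      have hXlow' := hreg1 (ztlk (i+1)) (hztlZ _) (zk i) (hzZ i)
      rw [hnega] at hXlow'
      have haa : m * p (zk i - ztlk (i+1)) ^ 2 ≤ M * p (zk i - ztlk (i+1)) ^ 2 := by
        linarith [hX, hXlow', hXsum, hXupb]
      have hZlow' := hreg1 (ztlk (i+1)) (hztlZ _) zs hzs
      rw [hnegb] at hZlow'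
      have hbb : m * p (zs - ztlk (i+1)) ^ 2 ≤ M * p (zs - ztlk (i+1)) ^ 2 := by
        linarith [hZ, hZlow', hYsum, hYupb]
      have h3pt : D (zk i) zs = D (zk i) (ztlk (i+1)) + D (ztlk (i+1)) zs +
          ⟪g (ztlk (i+1)) - g (zk i), zs - ztlk (i+1)⟫ := by
        simp only [hD, inner_sub_left, inner_sub_right]; ring
      have hcross := hreg2 (ztlk (i+1)) (hztlZ _) (zk i) (hzZ i) (zs - ztlk (i+1))
      have hDj : D (zk i) zs ≤ D (zk i) (ztlk (i+1)) + D (ztlk (i+1)) zs +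
          M * p (zk i - ztlk (i+1)) * p (zs - ztlk (i+1)) := by
        rw [hnega] at hcross
        linarith [h3pt, hcross]
      have hkey := key m M (1 - σ) (μ * lam) tlow (D (zk i) (ztlk (i+1)))
        (D (ztlk (i+1)) zs) (D zs (ztlk (i+1))) (p (zk i - ztlk (i+1)))
        (p (zs - ztlk (i+1))) (D (zk i) zs) hm hM hs hu htlow0 htlow_le hpa hpb
        hX hZ hYnn hXup hYup haa hbb hDj
      constructor
      · have hτη : (1 - τ) * ηk i ≤ (1 - tlow) * ηk i :=
          mul_le_mul_of_nonneg_right (by linarith) (hη i)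
        linarith [hE2, hkey, hτη]
      · have hX1 : (1 - σ) * D (zk i) (ztlk (i+1)) ≤ D (zk i) zs + ηk i := by
          have h5 : 0 ≤ lam * μ * (D (ztlk (i+1)) zs + D zs (ztlk (i+1))) :=
            mul_nonneg (mul_nonneg hlam.le hμ.le) (add_nonneg hYnn hZnn)
          have h6 : 0 ≤ τ * ηk i := mul_nonneg hτ0.le (hη i)
          linarith [hE2, hAnn (i+1)]
        have hε' : lamk (i+1) * εk (i+1) ≤ σ * D (zk i) (ztlk (i+1)) + ηk i := by
          linarith [herr', hWnn, hη (i+1), mul_nonneg hτ0.le (hη i)]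
        have h7 := mul_le_mul_of_nonneg_left hX1 hσ0
        have h8 := mul_le_mul_of_nonneg_left hε' hs.le
        linarith [h7, h8, mul_nonneg hs.le (Dnn _ (hzZ i) _ hzs), hη i]
    have hA : ∀ i, D (zk i) zs + ηk i ≤ (1 - tlow) ^ i * (D (zk 0) zs + ηk 0) := by
      intro i
      induction i with
      | zero => simp
      | succ n ih =>
        calc D (zk (n+1)) zs + ηk (n+1) ≤ (1 - tlow) * (D (zk n) zs + ηk n) := (step n).1
          _ ≤ (1 - tlow) * ((1 - tlow) ^ n * (D (zk 0) zs + ηk 0)) :=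
            mul_le_mul_of_nonneg_left ih h1t0
          _ = (1 - tlow) ^ (n+1) * (D (zk 0) zs + ηk 0) := by ring
    intro i
    have hPmono : (1 - tlow) ^ (i+1) * (D (zk 0) zs + ηk 0) ≤
        (1 - tlow) ^ i * (D (zk 0) zs + ηk 0) := by
      apply mul_le_mul_of_nonneg_right _ (hAnn 0)
      calc (1 - tlow) ^ (i+1) = (1 - tlow) * (1 - tlow) ^ i := by ring
        _ ≤ 1 * (1 - tlow) ^ i :=
          mul_le_mul_of_nonneg_right (by linarith) (pow_nonneg h1t0 i)
        _ = (1 - tlow) ^ i := one_mul _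
    constructor
    · -- p bound
      have htri : p (zk i - zk (i+1)) ≤ p (zk i - zs) + p (zs - zk (i+1)) := by
        have e : zk i - zk (i+1) = (zk i - zs) + (zs - zk (i+1)) := by abel
        rw [e]; exact map_add_le_add p _ _
      have hsq : p (zk i - zk (i+1)) ^ 2 ≤
          2 * p (zk i - zs) ^ 2 + 2 * p (zs - zk (i+1)) ^ 2 := by
        have h14 : p (zk i - zk (i+1)) ^ 2 ≤ (p (zk i - zs) + p (zs - zk (i+1))) ^ 2 :=
          pow_le_pow_left₀ (apply_nonneg p _) htri 2
        nlinarith [h14, sq_nonneg (p (zk i - zs) - p (zs - zk (i+1)))]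
      have hb1 := hreg1 (zk i) (hzZ i) zs hzs
      have hb2 := hreg1 (zk (i+1)) (hzZ (i+1)) zs hzs
      have hnegc : p (zk (i+1) - zs) = p (zs - zk (i+1)) := by
        rw [← neg_sub]; exact map_neg_eq_map p _
      rw [hnegc] at hb2
      have hd1 : D (zk i) zs ≤ (1 - tlow) ^ i * (D (zk 0) zs + ηk 0) :=
        le_trans (by linarith [hη i]) (hA i)
      have hd2 : D (zk (i+1)) zs ≤ (1 - tlow) ^ i * (D (zk 0) zs + ηk 0) :=
        le_trans (le_trans (by linarith [hη (i+1)]) (hA (i+1))) hPmono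
      rw [show 8 / m * ((1 - tlow) ^ i * (D (zk 0) zs + ηk 0)) =
        8 * ((1 - tlow) ^ i * (D (zk 0) zs + ηk 0)) / m by ring, le_div_iff₀ hm]
      linarith [mul_le_mul_of_nonneg_left hsq hm.le, hb1, hb2, hd1, hd2]
    · -- eps bound
      have h10 := (step i).2
      have h11 : lam * (1 - σ) * εk (i+1) ≤ (1 - σ) * (lamk (i+1) * εk (i+1)) := by
        have h12 := mul_le_mul_of_nonneg_left
          (mul_le_mul_of_nonneg_right (hlamk (i+1)) (hε (i+1))) hs.le
        linarith
      linarith [hA i, h10, h11]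
  -- final assembly
  intro k hk
  obtain ⟨j, rfl⟩ : ∃ j, k = j + 1 := ⟨k - 1, by omega⟩
  have hPpos : (0:ℝ) < (1 - tlow) ^ j := pow_pos (by linarith) j
  have hball : ∀ x ∈ {x : ℝ | ∃ zstar : E,
      (∃ a b : E, a ∈ S zstar ∧ b ∈ T zstar ∧ a + b = 0) ∧ x = D (zk 0) zstar},
      p (zk j - zk (j+1)) ^ 2 ≤ 8 / m * (1 - tlow) ^ j * (x + ηk 0) ∧
      lam * (1 - σ) * εk (j+1) ≤ (1 - tlow) ^ j * (x + ηk 0) := by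
    rintro x ⟨zs, ⟨a, b, ha, hb, hab⟩, rfl⟩
    have h12 := main zs a b ha hb hab j
    constructor
    · linarith [h12.1]
    · linarith [h12.2]
  have hr2 : p (zk j - zk (j+1)) ^ 2 ≤ 8 / m * (1 - tlow) ^ j * (d0 + ηk 0) := by
    rw [hd0]
    exact inf_helper _ hsetne _ _ (ηk 0) (by positivity) (fun x hx => (hball x hx).1)
  have he2 : lam * (1 - σ) * εk (j+1) ≤ (1 - tlow) ^ j * (d0 + ηk 0) := by
    rw [hd0]
    exact inf_helper _ hsetne _ _ (ηk 0) hPpos (fun x hx => (hball x hx).2)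
  constructor
  · intro u
    have hu0 : 0 ≤ p u := apply_nonneg p u
    have hrk' := hrk (j+1) (by omega)
    simp only [Nat.add_sub_cancel] at hrk'
    have hlp : 0 < lamk (j+1) := lt_of_lt_of_le hlam (hlamk _)
    have hip : (⟪rk (j+1), u⟫:ℝ) = (1 / lamk (j+1)) * ⟪g (zk j) - g (zk (j+1)), u⟫ := by
      rw [hrk']; exact real_inner_smul_left _ _ _
    have hbound := hreg2 (zk j) (hzZ j) (zk (j+1)) (hzZ (j+1)) u
    have hQnn : 0 ≤ M * p (zk j - zk (j+1)) * p u := by positivity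
    have h1 : (⟪rk (j+1), u⟫:ℝ) ≤ 1 / lam * (M * p (zk j - zk (j+1)) * p u) := by
      rw [hip]
      calc (1 / lamk (j+1)) * ⟪g (zk j) - g (zk (j+1)), u⟫ ≤
          (1 / lamk (j+1)) * (M * p (zk j - zk (j+1)) * p u) :=
            mul_le_mul_of_nonneg_left hbound (by positivity)
        _ ≤ 1 / lam * (M * p (zk j - zk (j+1)) * p u) :=
            mul_le_mul_of_nonneg_right (one_div_le_one_div_of_le hlam (hlamk _)) hQnn
    have hpnn : 0 ≤ p (zk j - zk (j+1)) := apply_nonneg p _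
    have hp2 : p (zk j - zk (j+1)) ≤ Real.sqrt (8 / m * (1 - tlow) ^ j * (d0 + ηk 0)) := by
      have h13 := Real.sqrt_le_sqrt hr2
      rwa [Real.sqrt_sq hpnn] at h13
    have hsqrt8 : Real.sqrt (8 / m * (1 - tlow) ^ j * (d0 + ηk 0)) =
        2 * Real.sqrt 2 / Real.sqrt m *
          (Real.sqrt ((1 - tlow) ^ j) * Real.sqrt (d0 + ηk 0)) := by
      rw [Real.sqrt_mul (by positivity) (d0 + ηk 0),
        Real.sqrt_mul (by positivity) ((1 - tlow) ^ j),
        Real.sqrt_div (by norm_num : (0:ℝ) ≤ 8), show (8:ℝ) = 2 ^ 2 * 2 by norm_num,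
        Real.sqrt_mul (by positivity), Real.sqrt_sq (by norm_num : (0:ℝ) ≤ 2)]
      ring
    have he : (((j + 1 : ℕ) : ℝ) - 1) / 2 = (j : ℝ) * (1 / 2) := by push_cast; ring
    have hPsqrt : (1 - tlow) ^ ((((j + 1 : ℕ) : ℝ) - 1) / 2) =
        Real.sqrt ((1 - tlow) ^ j) := by
      rw [he, Real.rpow_mul h1t0, Real.rpow_natCast, ← Real.sqrt_eq_rpow]
    calc (⟪rk (j+1), u⟫:ℝ) ≤ 1 / lam * (M * p (zk j - zk (j+1)) * p u) := h1
      _ ≤ 1 / lam * (M * Real.sqrt (8 / m * (1 - tlow) ^ j * (d0 + ηk 0)) * p u) := by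
          apply mul_le_mul_of_nonneg_left _ (by positivity)
          apply mul_le_mul_of_nonneg_right _ hu0
          exact mul_le_mul_of_nonneg_left hp2 hM.le
      _ = 2 * Real.sqrt 2 * M / (lam * Real.sqrt m) *
            (1 - tlow) ^ ((((j + 1 : ℕ) : ℝ) - 1) / 2) * Real.sqrt (d0 + ηk 0) * p u := by
          rw [hsqrt8, hPsqrt]; ring
  · simp only [Nat.add_sub_cancel]
    rw [show 1 / (lam * (1 - σ)) * (1 - tlow) ^ j * (d0 + ηk 0) =
      ((1 - tlow) ^ j * (d0 + ηk 0)) / (lam * (1 - σ)) by ring,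
      le_div_iff₀ (mul_pos hlam hs)]
    linarith [he2]
end

section
/- (Regularization does not increase the distance to the solution set) Let T be a monotone operator with 0 ∈ T(z*) for some z*, let w be a distance generating function, z₀ ∈ int(dom w), μ > 0, and suppose z*_μ satisfies 0 ∈ T(z*_μ) + μ(∇w(z*_μ) - ∇w(z₀)). Then (dw)_{z₀}(z*_μ) ≤ (dw)_{z₀}(z*). Consequently, inf{(dw)_{z₀}(z) : z ∈ Z*_μ} ≤ inf{(dw)_{z₀}(z) : 0 ∈ T(z)} where Z*_μ is the solution set of the regularized inclusion. -/
open RealInnerProductSpace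

private lemma grad_ineq {E : Type*} [NormedAddCommGroup E] [InnerProductSpace ℝ E]
    [FiniteDimensional ℝ E] {w : E → ℝ} {g : E → E}
    (hconv : ConvexOn ℝ Set.univ w) (hg : ∀ x : E, HasGradientAt w (g x) x)
    (x y : E) : w x + ⟪g x, y - x⟫ ≤ w y := by
  rcases eq_or_ne x y with rfl | hxy
  · simp
  set φ : ℝ → ℝ := fun t => w (t • (y - x) + x) with hφ
  have hφconv : ConvexOn ℝ Set.univ φ := by
    have := hconv.comp_affineMap (AffineMap.lineMap x y : ℝ →ᵃ[ℝ] E)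
    simpa [φ, Function.comp_def, AffineMap.lineMap_apply] using this
  have hderiv : HasDerivAt φ ⟪g x, y - x⟫ 0 := by
    have hline : HasDerivAt (fun t : ℝ => t • (y - x) + x) (y - x) 0 := by
      simpa using ((hasDerivAt_id (0 : ℝ)).smul_const (y - x)).add_const x
    have := ((hg ((0 : ℝ) • (y - x) + x)).hasFDerivAt.comp_hasDerivAt 0 hline)
    simpa [Function.comp_def, InnerProductSpace.toDual_apply_apply, real_inner_comm] using this
  have h01 : (0 : ℝ) < 1 := one_pos
  have := hφconv.le_slope_of_hasDerivAt (Set.mem_univ (0:ℝ)) (Set.mem_univ (1:ℝ)) h01 hderiv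
  have hs : slope φ 0 1 = φ 1 - φ 0 := by simp [slope_def_field]
  have : ⟪g x, y - x⟫ ≤ φ 1 - φ 0 := by rw [hs] at this; exact this
  have h0 : φ 0 = w x := by simp [φ]
  have h1 : φ 1 = w y := by simp [φ]
  rw [h0, h1] at this
  linarith

/-- Regularization does not increase the Bregman distance to the solution set: if `T` is
monotone, `0 ∈ T(z*)` and `0 ∈ T(z*_μ) + μ(∇w(z*_μ) - ∇w(z₀))`, then
`(dw)_{z₀}(z*_μ) ≤ (dw)_{z₀}(z*)`; consequently
`inf{(dw)_{z₀}(z) : z ∈ Z*_μ} ≤ inf{(dw)_{z₀}(z) : 0 ∈ T(z)}`. -/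
theorem stmt15 {E : Type*} [NormedAddCommGroup E] [InnerProductSpace ℝ E]
    [FiniteDimensional ℝ E]
    (w : E → ℝ) (g : E → E)
    (hconv : ConvexOn ℝ Set.univ w)
    (hg : ∀ x : E, HasGradientAt w (g x) x)
    (D : E → E → ℝ)
    (hD : ∀ z z' : E, D z z' = w z' - w z - ⟪g z, z' - z⟫)
    (T : E → Set E)
    (hTmono : ∀ z z' v v' : E, v ∈ T z → v' ∈ T z' → 0 ≤ ⟪z - z', v - v'⟫)
    (μ : ℝ) (hμ : 0 < μ) (z0 : E)
    (Zmu : Set E) (hZmu : Zmu = {zz : E | -(μ • (g zz - g z0)) ∈ T zz})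
    (zstar zmu : E) (hzstar : (0 : E) ∈ T zstar) (hzmu : zmu ∈ Zmu) :
    D z0 zmu ≤ D z0 zstar ∧
    sInf ((fun zz => D z0 zz) '' Zmu) ≤
      sInf {x : ℝ | ∃ zz : E, (0 : E) ∈ T zz ∧ x = D z0 zz} := by
  have hzmu' : -(μ • (g zmu - g z0)) ∈ T zmu := by rw [hZmu] at hzmu; exact hzmu
  -- key lemma: for any z' with 0 ∈ T z', D z0 zmu ≤ D z0 z'
  have key : ∀ z' : E, (0 : E) ∈ T z' → D z0 zmu ≤ D z0 z' := by
    intro z' hz'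
    have hmono := hTmono z' zmu 0 (-(μ • (g zmu - g z0))) hz' hzmu'
    have hmono' : 0 ≤ μ * ⟪z' - zmu, g zmu - g z0⟫ := by
      have : (0 : E) - -(μ • (g zmu - g z0)) = μ • (g zmu - g z0) := by abel
      rw [this, real_inner_smul_right] at hmono
      exact hmono
    have hmono'' : 0 ≤ ⟪g zmu - g z0, z' - zmu⟫ := by
      rw [real_inner_comm]
      exact nonneg_of_mul_nonneg_right hmono' hμ
    have hgrad := grad_ineq hconv hg zmu z'
    have hexp : ⟪g zmu - g z0, z' - zmu⟫ = ⟪g zmu, z' - zmu⟫ - ⟪g z0, z' - zmu⟫ := by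
      rw [inner_sub_left]
    have hsplit : ⟪g z0, z' - z0⟫ - ⟪g z0, zmu - z0⟫ = ⟪g z0, z' - zmu⟫ := by
      rw [← inner_sub_right]; congr 1; abel
    rw [hD z0 zmu, hD z0 z']
    nlinarith [hgrad, hmono'', hexp, hsplit]
  have h1 : D z0 zmu ≤ D z0 zstar := key zstar hzstar
  refine ⟨h1, ?_⟩
  have hbdd : BddBelow ((fun zz => D z0 zz) '' Zmu) := by
    refine ⟨0, ?_⟩
    rintro x ⟨z, _, rfl⟩
    have := grad_ineq hconv hg z0 z
    show (0:ℝ) ≤ D z0 z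
    rw [hD z0 z]; linarith
  have hmem : D z0 zmu ∈ (fun zz => D z0 zz) '' Zmu := ⟨zmu, hzmu, rfl⟩
  have hle : sInf ((fun zz => D z0 zz) '' Zmu) ≤ D z0 zmu := csInf_le hbdd hmem
  refine le_csInf ⟨D z0 zstar, zstar, hzstar, rfl⟩ ?_
  rintro x ⟨z', hz', rfl⟩
  exact hle.trans (key z' hz')
end

section
/- For every θ ∈ [1, (1+√5)/2), the 2×2 symmetric matrix M(θ) with entries M₁₁ = θ (= σ(1+θ)-1 at σ=1), M₁₂ = M₂₁ = θ(1-θ) (= (σ+θ-1)(1-θ) at σ=1), M₂₂ = 1-(θ-1)² (= σ-(θ-1)² at σ=1, τ=0) is positive definite; equivalently θ(1-(θ-1)²) - θ²(1-θ)² > 0 and θ > 0. -/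
/-- For every `θ ∈ [1, (1+√5)/2)`, the symmetric matrix with entries
`M₁₁ = θ`, `M₁₂ = M₂₁ = θ(1-θ)`, `M₂₂ = 1-(θ-1)²` is positive definite; equivalently
`θ > 0` and `θ(1-(θ-1)²) - θ²(1-θ)² > 0`. -/
theorem stmt18 (θ : ℝ) (h1 : 1 ≤ θ) (h2 : θ < (1 + Real.sqrt 5) / 2) :
    (!![θ, θ * (1 - θ); θ * (1 - θ), 1 - (θ - 1) ^ 2] : Matrix (Fin 2) (Fin 2) ℝ).PosDef ∧
    (0 < θ ∧ 0 < θ * (1 - (θ - 1) ^ 2) - θ ^ 2 * (1 - θ) ^ 2) := by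
  have h5 : Real.sqrt 5 ^ 2 = 5 := Real.sq_sqrt (by norm_num)
  have hlt : 2 * θ - 1 < Real.sqrt 5 := by linarith
  have hquad : θ ^ 2 - θ - 1 < 0 := by nlinarith [sq_nonneg (2 * θ - 1)]
  have hθ : 0 < θ := by linarith
  have hdet : 0 < θ * (1 - (θ - 1) ^ 2) - θ ^ 2 * (1 - θ) ^ 2 := by nlinarith
  refine ⟨⟨?_, ?_⟩, hθ, hdet⟩
  · rw [Matrix.IsHermitian]
    ext i j
    fin_cases i <;> fin_cases j <;> simp [Matrix.conjTranspose, Matrix.transpose, Matrix.vecHead, Matrix.vecTail]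
  · intro x hx
    have hx' : x 0 ≠ 0 ∨ x 1 ≠ 0 := by
      by_contra h
      push_neg at h
      exact hx (Finsupp.ext fun i => by fin_cases i <;> simp [h.1, h.2])
    have hexp : (x.sum fun i xi ↦ x.sum fun j xj ↦ star xi *
        (!![θ, θ * (1 - θ); θ * (1 - θ), 1 - (θ - 1) ^ 2] : Matrix (Fin 2) (Fin 2) ℝ) i j * xj)
        = θ * x 0 ^ 2 + 2 * (θ * (1 - θ)) * x 0 * x 1 + (1 - (θ - 1) ^ 2) * x 1 ^ 2 := by
      simp [Finsupp.sum_fintype, Fin.sum_univ_two]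
      ring
    rw [hexp]
    by_cases hx1 : x 1 = 0
    · have h0 : x 0 ≠ 0 := hx'.resolve_right (by simp [hx1])
      rw [hx1]
      nlinarith [sq_pos_of_ne_zero h0]
    · nlinarith [sq_nonneg (θ * x 0 + θ * (1 - θ) * x 1),
        mul_pos hdet (sq_pos_of_ne_zero hx1)]
end

section
/- Let E : Z → Z̃ be a linear map between finite-dimensional real inner product spaces, e ∈ Im(E), and h : Z → (-∞,∞] a proper closed convex function such that inf{h(z) : Ez = e} < ∞. If ri(dom h*) ∩ Im(E*) ≠ ∅ (where h* is the Fenchel conjugate and E* the adjoint), then the problem inf{h(z) + (1/2)‖Ez - e‖² : z ∈ Z} has an optimal solution. -/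
open RealInnerProductSpace

private lemma ereal_mul_le_coe {a t : ℝ} (ha : 0 ≤ a) {x : EReal} (hx : x ≤ (t : EReal)) :
    (a : EReal) * x ≤ ((a * t : ℝ) : EReal) := by
  rcases eq_or_lt_of_le ha with rfl | hpos
  · simp [EReal.zero_mul]
  · induction x with
    | bot => rw [EReal.coe_mul_bot_of_pos hpos]; exact bot_le
    | coe r =>
      rw [← EReal.coe_mul, EReal.coe_le_coe_iff]
      exact mul_le_mul_of_nonneg_left (EReal.coe_le_coe_iff.mp hx) ha
    | top => exact absurd hx (by simp)

private lemma lsc_closed_sub {X : Type*} [TopologicalSpace X] {h : X → EReal}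
    (hlsc : LowerSemicontinuous h) {g : X → ℝ} (hg : Continuous g) :
    IsClosed {x | h x ≤ (g x : EReal)} := by
  rw [← isOpen_compl_iff, isOpen_iff_mem_nhds]
  intro x hx
  simp only [Set.mem_compl_iff, Set.mem_setOf_eq, not_le] at hx
  obtain ⟨y, hy1, hy2⟩ := exists_between hx
  have hyb : y ≠ ⊥ := fun hbot => by simp [hbot] at hy1
  have hyt : y ≠ ⊤ := hy2.ne_top
  set q := y.toReal with hq
  have hyq : y = (q : EReal) := (EReal.coe_toReal hyt hyb).symm
  have h1 : ∀ᶠ x' in nhds x, (q : EReal) < h x' := hlsc x (q : EReal) (hyq ▸ hy2)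
  have h2 : ∀ᶠ x' in nhds x, g x' < q := by
    have : g x < q := by
      have := hy1; rw [hyq] at this
      exact_mod_cast this
    exact (hg.tendsto x).eventually (eventually_lt_nhds this)
  filter_upwards [h1, h2] with x' h1' h2'
  simp only [Set.mem_compl_iff, Set.mem_setOf_eq, not_le]
  exact lt_trans (EReal.coe_lt_coe_iff.mpr h2') h1'

private lemma fm_sep {Z : Type*} [NormedAddCommGroup Z] [InnerProductSpace ℝ Z]
    [FiniteDimensional ℝ Z]
    (h : Z → EReal) (hbot : ∀ z, h z ≠ ⊥)
    (hlsc : LowerSemicontinuous h)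
    (hconvex : ∀ z z' : Z, ∀ a b : ℝ, 0 ≤ a → 0 ≤ b → a + b = 1 →
      h (a • z + b • z') ≤ (a : EReal) * h z + (b : EReal) * h z')
    (z₁ : Z) (hz₁ : h z₁ ≠ ⊤)
    (z : Z) (r : ℝ) (hr : (r : EReal) < h z) :
    ∃ (v : Z) (β u : ℝ), β ≤ 0 ∧ (∀ (y : Z) (t : ℝ), h y ≤ (t : EReal) → ⟪v, y⟫ + β * t < u) ∧
      u < ⟪v, z⟫ + β * r := by
  classical
  set S : Set (Z × ℝ) := {p | h p.1 ≤ (p.2 : EReal)} with hS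
  have hlsc' : LowerSemicontinuous (fun p : Z × ℝ => h p.1) := fun p y hy =>
    (continuous_fst.tendsto p).eventually (hlsc p.1 y hy)
  have hSclosed : IsClosed S := lsc_closed_sub hlsc' continuous_snd
  have hSconv : Convex ℝ S := by
    intro p hp q hq a b ha hb hab
    simp only [hS, Set.mem_setOf_eq] at hp hq ⊢
    have h1 : (a • p + b • q).1 = a • p.1 + b • q.1 := rfl
    have h2 : ((a • p + b • q).2 : ℝ) = a * p.2 + b * q.2 := by
      simp [Prod.smul_snd, smul_eq_mul]
    rw [h1, h2]
    calc h (a • p.1 + b • q.1) ≤ (a : EReal) * h p.1 + (b : EReal) * h q.1 :=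
          hconvex _ _ a b ha hb hab
      _ ≤ ((a * p.2 : ℝ) : EReal) + ((b * q.2 : ℝ) : EReal) :=
          add_le_add (ereal_mul_le_coe ha hp) (ereal_mul_le_coe hb hq)
      _ = ((a * p.2 + b * q.2 : ℝ) : EReal) := (EReal.coe_add _ _).symm
  have hxnot : (z, r) ∉ S := by
    simp only [hS, Set.mem_setOf_eq, not_le]
    exact hr
  obtain ⟨f, u, hfu, hfx⟩ := geometric_hahn_banach_closed_point hSconv hSclosed hxnot
  set g : Z →L[ℝ] ℝ := f.comp (ContinuousLinearMap.inl ℝ Z ℝ) with hg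
  set v : Z := (InnerProductSpace.toDual ℝ Z).symm g with hv
  set β : ℝ := f (0, 1) with hβ
  have hvy : ∀ y : Z, ⟪v, y⟫ = f (y, 0) := by
    intro y
    rw [hv, InnerProductSpace.toDual_symm_apply]
    rfl
  have feq : ∀ (y : Z) (t : ℝ), f (y, t) = ⟪v, y⟫ + β * t := by
    intro y t
    have h1 : (y, t) = (y, (0 : ℝ)) + ((0 : Z), t) := by simp
    have h2 : ((0 : Z), t) = t • ((0 : Z), (1 : ℝ)) := by simp
    rw [h1, map_add, h2, map_smul, smul_eq_mul, hvy, hβ, mul_comm]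
  have ht₁ : h z₁ = ((h z₁).toReal : EReal) := (EReal.coe_toReal hz₁ (hbot z₁)).symm
  set t₁ : ℝ := (h z₁).toReal with hht₁
  have hβle : β ≤ 0 := by
    by_contra hc
    push_neg at hc
    set tm : ℝ := max t₁ ((u - ⟪v, z₁⟫) / β) with htm
    have hmem : (z₁, tm) ∈ S := by
      simp only [hS, Set.mem_setOf_eq]
      rw [ht₁]
      exact_mod_cast EReal.coe_le_coe_iff.mpr (le_max_left _ _)
    have h3 := hfu _ hmem
    rw [feq] at h3
    have h4 : (u - ⟪v, z₁⟫) / β ≤ tm := le_max_right _ _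
    rw [div_le_iff₀ hc] at h4
    linarith [mul_comm tm β]
  refine ⟨v, β, u, hβle, ?_, ?_⟩
  · intro y t hyt
    have : (y, t) ∈ S := hyt
    have := hfu _ this
    rwa [feq] at this
  · rw [feq] at hfx
    exact hfx

private lemma fm {Z : Type*} [NormedAddCommGroup Z] [InnerProductSpace ℝ Z]
    [FiniteDimensional ℝ Z]
    (h : Z → EReal) (hbot : ∀ z, h z ≠ ⊥)
    (hlsc : LowerSemicontinuous h)
    (hconvex : ∀ z z' : Z, ∀ a b : ℝ, 0 ≤ a → 0 ≤ b → a + b = 1 →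
      h (a • z + b • z') ≤ (a : EReal) * h z + (b : EReal) * h z')
    (z₁ : Z) (hz₁ : h z₁ ≠ ⊤)
    (z : Z) (r : ℝ) (hr : (r : EReal) < h z) :
    ∃ (v : Z) (c : ℝ), (∀ y, ((⟪v, y⟫ - c : ℝ) : EReal) ≤ h y) ∧ r < ⟪v, z⟫ - c := by
  classical
  have mk_minor : ∀ (v' : Z) (β u : ℝ), β < 0 →
      (∀ (y : Z) (t : ℝ), h y ≤ (t : EReal) → ⟪v', y⟫ + β * t < u) →
      ∀ y, ((⟪(-β)⁻¹ • v', y⟫ - u / (-β) : ℝ) : EReal) ≤ h y := by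
    intro v' β u hβ hSp y
    by_cases hyt : h y = ⊤
    · rw [hyt]; exact le_top
    · have hye : h y = ((h y).toReal : EReal) := (EReal.coe_toReal hyt (hbot y)).symm
      set ty : ℝ := (h y).toReal with hty
      have h1 := hSp y ty (le_of_eq hye)
      have hpos : (0 : ℝ) < -β := by linarith
      have heq : ⟪(-β)⁻¹ • v', y⟫ - u / (-β) = (⟪v', y⟫ - u) / (-β) := by
        rw [real_inner_smul_left, inv_mul_eq_div, div_sub_div_same]
      have h2 : (⟪v', y⟫ - u) / (-β) < ty := by
        rw [div_lt_iff₀ hpos]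
        nlinarith
      rw [hye]
      apply EReal.coe_le_coe_iff.mpr
      rw [heq]
      linarith
  have ht₁ : h z₁ = ((h z₁).toReal : EReal) := (EReal.coe_toReal hz₁ (hbot z₁)).symm
  set t₁ : ℝ := (h z₁).toReal with hht₁
  -- Stage A: base minorant
  have hr₁ : ((t₁ - 1 : ℝ) : EReal) < h z₁ := by
    rw [ht₁]
    exact_mod_cast EReal.coe_lt_coe_iff.mpr (by linarith)
  obtain ⟨v₁', β₁, u₁, hβ₁le, hS₁, hx₁⟩ := fm_sep h hbot hlsc hconvex z₁ hz₁ z₁ (t₁ - 1) hr₁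
  have hβ₁ : β₁ < 0 := by
    have h1 := hS₁ z₁ t₁ (le_of_eq ht₁)
    nlinarith
  obtain ⟨v₁, c₁, hmin₁⟩ : ∃ (v₁ : Z) (c₁ : ℝ), ∀ y, ((⟪v₁, y⟫ - c₁ : ℝ) : EReal) ≤ h y :=
    ⟨_, _, mk_minor v₁' β₁ u₁ hβ₁ hS₁⟩
  -- Stage B: separation at (z, r)
  obtain ⟨v', β, u, hβle, hSp, hx⟩ := fm_sep h hbot hlsc hconvex z₁ hz₁ z r hr
  rcases eq_or_lt_of_le hβle with rfl | hβ
  · -- β = 0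
    have hdomlt : ∀ y, h y ≠ ⊤ → ⟪v', y⟫ < u := by
      intro y hyt
      have hye : h y = ((h y).toReal : EReal) := (EReal.coe_toReal hyt (hbot y)).symm
      have := hSp y (h y).toReal (le_of_eq hye)
      simpa using this
    have hδpos : (0 : ℝ) < ⟪v', z⟫ - u := by simp at hx; linarith
    set δ : ℝ := ⟪v', z⟫ - u with hδ
    set M : ℝ := max 0 ((r - (⟪v₁, z⟫ - c₁)) / δ) + 1 with hM
    have hM0 : 0 ≤ M := by positivity
    have hMδ : r - (⟪v₁, z⟫ - c₁) < M * (⟪v', z⟫ - u) := by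
      have h1 : (r - (⟪v₁, z⟫ - c₁)) / δ < M := by
        have := le_max_right (0:ℝ) ((r - (⟪v₁, z⟫ - c₁)) / δ)
        linarith
      rw [div_lt_iff₀ hδpos] at h1
      have h2 : δ = ⟪v', z⟫ - u := hδ
      nlinarith [h1]
    refine ⟨v₁ + M • v', c₁ + M * u, ?_, ?_⟩
    · intro y
      by_cases hyt : h y = ⊤
      · rw [hyt]; exact le_top
      · have hye : h y = ((h y).toReal : EReal) := (EReal.coe_toReal hyt (hbot y)).symm
        have h1 : (⟪v₁, y⟫ - c₁ : ℝ) ≤ (h y).toReal := by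
          have := hmin₁ y
          rw [hye] at this
          exact_mod_cast this
        have h2 : M * ⟪v', y⟫ ≤ M * u :=
          mul_le_mul_of_nonneg_left (le_of_lt (hdomlt y hyt)) hM0
        rw [hye]
        apply EReal.coe_le_coe_iff.mpr
        rw [inner_add_left, real_inner_smul_left]
        linarith
    · rw [inner_add_left, real_inner_smul_left]
      nlinarith [hMδ]
  · -- β < 0
    refine ⟨(-β)⁻¹ • v', u / (-β), mk_minor v' β u hβ hSp, ?_⟩
    have hpos : (0 : ℝ) < -β := by linarith
    have heq : ⟪(-β)⁻¹ • v', z⟫ - u / (-β) = (⟪v', z⟫ - u) / (-β) := by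
      rw [real_inner_smul_left, inv_mul_eq_div, div_sub_div_same]
    rw [heq, lt_div_iff₀ hpos]
    nlinarith
private lemma intrinsic_step {W : Type*} [NormedAddCommGroup W] [NormedSpace ℝ W]
    {s : Set W} {x : W} (hx : x ∈ intrinsicInterior ℝ s) {y : W} (hy : y ∈ s) :
    ∃ ε : ℝ, 0 < ε ∧ ε • (x - y) + x ∈ s := by
  obtain ⟨p, hp, hpx⟩ := hx
  have hxs : x ∈ affineSpan ℝ s := hpx ▸ p.2
  have hys : y ∈ affineSpan ℝ s := subset_affineSpan ℝ s hy
  have hmem : ∀ t : ℝ, t • (x - y) + x ∈ affineSpan ℝ s := fun t => by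
    have := AffineSubspace.smul_vsub_vadd_mem (affineSpan ℝ s) t hxs hys hxs
    simpa [vsub_eq_sub, vadd_eq_add] using this
  set γ : ℝ → affineSpan ℝ s := fun t => ⟨t • (x - y) + x, hmem t⟩ with hγ
  have hcont : Continuous γ := by
    apply Continuous.subtype_mk
    exact (continuous_id.smul continuous_const).add continuous_const
  have hγ0 : γ 0 = p := by
    apply Subtype.ext
    simp [hγ, hpx]
  have hopen : IsOpen (γ ⁻¹' interior (((↑) : affineSpan ℝ s → W) ⁻¹' s)) :=
    isOpen_interior.preimage hcont
  have h0 : (0 : ℝ) ∈ γ ⁻¹' interior (((↑) : affineSpan ℝ s → W) ⁻¹' s) := by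
    simp only [Set.mem_preimage, hγ0]; exact hp
  obtain ⟨δ, hδ, hball⟩ := Metric.isOpen_iff.mp hopen 0 h0
  refine ⟨δ / 2, by linarith, ?_⟩
  have hmemball : (δ / 2 : ℝ) ∈ Metric.ball (0 : ℝ) δ := by
    rw [Metric.mem_ball, dist_zero_right, Real.norm_eq_abs, abs_of_pos (by linarith)]
    linarith
  have hin : γ (δ / 2) ∈ interior (((↑) : affineSpan ℝ s → W) ⁻¹' s) := hball hmemball
  have := interior_subset hin
  simpa [hγ] using this


/-- Existence of an optimal solution for the penalized problem
`inf h(z) + (1/2)‖Ez - e‖²`: if `e ∈ Im E`, `h` is proper closed convex,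
`inf{h(z) : Ez = e} < ∞`, and `ri(dom h*) ∩ Im(E*) ≠ ∅`, then
`inf{h(z) + (1/2)‖Ez - e‖²}` is attained. -/
theorem stmt19 {Z Zt : Type*} [NormedAddCommGroup Z] [InnerProductSpace ℝ Z]
    [FiniteDimensional ℝ Z]
    [NormedAddCommGroup Zt] [InnerProductSpace ℝ Zt] [FiniteDimensional ℝ Zt]
    (E : Z →ₗ[ℝ] Zt) (e : Zt) (he : e ∈ Set.range E)
    (h : Z → EReal)
    (hproper : (∀ z, h z ≠ ⊥) ∧ ∃ z, h z ≠ ⊤)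
    (hlsc : LowerSemicontinuous h)
    (hconvex : ∀ z z' : Z, ∀ a b : ℝ, 0 ≤ a → 0 ≤ b → a + b = 1 →
      h (a • z + b • z') ≤ (a : EReal) * h z + (b : EReal) * h z')
    (hstar : Z → EReal)
    (hhstar : ∀ v : Z, hstar v = ⨆ z : Z, ((⟪v, z⟫ : ℝ) : EReal) - h z)
    (hfeas : ∃ z : Z, E z = e ∧ h z < ⊤)
    (hri : (intrinsicInterior ℝ {v : Z | hstar v ≠ ⊤} ∩
      Set.range (LinearMap.adjoint E)).Nonempty) :
    ∃ z₀ : Z, ∀ z : Z,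
      h z₀ + ((1 / 2 * ‖E z₀ - e‖ ^ 2 : ℝ) : EReal) ≤
        h z + ((1 / 2 * ‖E z - e‖ ^ 2 : ℝ) : EReal) := by
  classical
  obtain ⟨hbot, -⟩ := hproper
  obtain ⟨zb, hEzb, hzblt⟩ := hfeas
  have hzbt : h zb ≠ ⊤ := hzblt.ne
  have hzbeq : h zb = (((h zb).toReal : ℝ) : EReal) := (EReal.coe_toReal hzbt (hbot zb)).symm
  set bb : ℝ := (h zb).toReal with hbbdef
  obtain ⟨v₀, hv₀mem⟩ := hri
  obtain ⟨u₀, hu₀⟩ := hv₀mem.2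
  have hv₀ri : v₀ ∈ intrinsicInterior ℝ {v : Z | hstar v ≠ ⊤} := hv₀mem.1
  have hv₀dom : hstar v₀ ≠ ⊤ := intrinsicInterior_subset hv₀ri
  -- hstar is never ⊥
  have hstar_ne_bot : ∀ v : Z, hstar v ≠ ⊥ := by
    intro v hb
    have h1 : ((⟪v, zb⟫ : ℝ) : EReal) - h zb ≤ hstar v := by
      rw [hhstar]
      exact le_iSup (fun z => ((⟪v, z⟫ : ℝ) : EReal) - h z) zb
    rw [hb, hzbeq, ← EReal.coe_sub, le_bot_iff] at h1
    exact EReal.coe_ne_bot _ h1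
  -- affine minorants from dom h*
  have minor : ∀ v : Z, hstar v ≠ ⊤ → ∀ y : Z, h y ≠ ⊤ →
      ⟪v, y⟫ - (hstar v).toReal ≤ (h y).toReal := by
    intro v hv y hy
    have h1 : ((⟪v, y⟫ : ℝ) : EReal) - h y ≤ hstar v := by
      rw [hhstar]
      exact le_iSup (fun z => ((⟪v, z⟫ : ℝ) : EReal) - h z) y
    have hye : h y = (((h y).toReal : ℝ) : EReal) := (EReal.coe_toReal hy (hbot y)).symm
    have hve : hstar v = (((hstar v).toReal : ℝ) : EReal) :=
      (EReal.coe_toReal hv (hstar_ne_bot v)).symm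
    rw [hye, hve, ← EReal.coe_sub, EReal.coe_le_coe_iff] at h1
    linarith
  -- minorants bound hstar
  have star_le : ∀ (v : Z) (c : ℝ), (∀ y, ((⟪v, y⟫ - c : ℝ) : EReal) ≤ h y) →
      hstar v ≤ (c : EReal) := by
    intro v c hm
    rw [hhstar]
    apply iSup_le
    intro y
    by_cases hyt : h y = ⊤
    · rw [hyt, EReal.sub_top]
      exact bot_le
    · have hye : h y = (((h y).toReal : ℝ) : EReal) := (EReal.coe_toReal hyt (hbot y)).symm
      have h1 := hm y
      rw [hye] at h1 ⊢
      rw [EReal.coe_le_coe_iff] at h1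
      rw [← EReal.coe_sub, EReal.coe_le_coe_iff]
      linarith
  -- monotonicity along directions orthogonal to dom h*
  have hmono : ∀ d : Z, (∀ v, hstar v ≠ ⊤ → ⟪v, d⟫ = 0) → ∀ z : Z, h (z + d) ≤ h z := by
    intro d hd z
    by_contra hcon
    push_neg at hcon
    have hzt : h z ≠ ⊤ := ne_top_of_lt hcon
    have hze : h z = (((h z).toReal : ℝ) : EReal) := (EReal.coe_toReal hzt (hbot z)).symm
    obtain ⟨y, hy1, hy2⟩ := exists_between hcon
    have hyb : y ≠ ⊥ := ne_of_gt (lt_of_le_of_lt bot_le hy1)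
    have hyt : y ≠ ⊤ := hy2.ne_top
    have hyeq : y = ((y.toReal : ℝ) : EReal) := (EReal.coe_toReal hyt hyb).symm
    set r : ℝ := y.toReal with hrdef
    have hr2 : (r : EReal) < h (z + d) := hyeq ▸ hy2
    obtain ⟨v, c, hminv, hstrict⟩ := fm h hbot hlsc hconvex zb hzbt (z + d) r hr2
    have hdomv : hstar v ≠ ⊤ := by
      intro ht
      have := star_le v c hminv
      rw [ht] at this
      simp at this
    have hvd : ⟪v, d⟫ = 0 := hd v hdomv
    have h1 := hminv z
    rw [hze, EReal.coe_le_coe_iff] at h1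
    have h2 : ⟪v, z + d⟫ = ⟪v, z⟫ := by rw [inner_add_right, hvd, add_zero]
    have h3 : ((h z).toReal : ℝ) < r := by
      have := hy1
      rw [hze, hyeq, EReal.coe_lt_coe_iff] at this
      exact this
    rw [h2] at hstrict
    linarith
  -- the subspace L of flat directions
  set domS : Set Z := {v : Z | hstar v ≠ ⊤} with hdomS
  set L : Submodule ℝ Z := LinearMap.ker E ⊓ (Submodule.span ℝ domS)ᗮ with hLdef
  have memL : ∀ d : Z, d ∈ L ↔ (E d = 0 ∧ ∀ v, hstar v ≠ ⊤ → ⟪v, d⟫ = 0) := by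
    intro d
    rw [hLdef, Submodule.mem_inf, LinearMap.mem_ker]
    constructor
    · rintro ⟨h1, h2⟩
      refine ⟨h1, fun v hv => ?_⟩
      exact (Submodule.mem_orthogonal _ d).mp h2 v (Submodule.subset_span hv)
    · rintro ⟨h1, h2⟩
      refine ⟨h1, (Submodule.mem_orthogonal _ d).mpr ?_⟩
      intro x hx
      have hspan : Submodule.span ℝ domS ≤ (ℝ ∙ d)ᗮ := by
        rw [Submodule.span_le]
        intro v hv
        rw [SetLike.mem_coe, Submodule.mem_orthogonal]
        intro u hu
        obtain ⟨cc, rfl⟩ := Submodule.mem_span_singleton.mp hu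
        rw [real_inner_smul_left, real_inner_comm, h2 v hv, mul_zero]
      have hx' := hspan hx
      have := (Submodule.mem_orthogonal _ x).mp hx' d (Submodule.mem_span_singleton_self d)
      rw [real_inner_comm] at this
      exact this
  have hconstL : ∀ d ∈ L, ∀ z : Z, h (z + d) = h z := by
    intro d hd z
    obtain ⟨hEd, hvd⟩ := (memL d).mp hd
    refine le_antisymm (hmono d hvd z) ?_
    have h2 := hmono (-d) (fun v hv => by rw [inner_neg_right, hvd v hv, neg_zero]) (z + d)
    simpa using h2
  -- setup of the penalty function and the truncated feasible set
  have hEc : Continuous E := E.continuous_of_finiteDimensional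
  set q : Z → ℝ := fun z => 1 / 2 * ‖E z - e‖ ^ 2 with hqdef
  have hq_eq : ∀ z, q z = 1 / 2 * ‖E z - e‖ ^ 2 := fun _ => rfl
  have hq0 : ∀ z, 0 ≤ q z := fun z => by rw [hq_eq]; positivity
  have hqc : Continuous q := by
    rw [hqdef]
    exact continuous_const.mul (((hEc.sub continuous_const).norm).pow 2)
  set T : Set Z := (Lᗮ : Set Z) ∩ {z : Z | h z ≤ ((bb - q z : ℝ) : EReal)} with hTdef
  have hTclosed : IsClosed T :=
    (Submodule.closed_of_finiteDimensional Lᗮ).inter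
      (lsc_closed_sub hlsc (continuous_const.sub hqc))
  have hTmem : ∀ z ∈ T, h z ≠ ⊤ ∧ (h z).toReal + q z ≤ bb := by
    intro z hz
    obtain ⟨-, h2⟩ := hz
    simp only [Set.mem_setOf_eq] at h2
    have hzt : h z ≠ ⊤ := by
      intro ht
      rw [ht, top_le_iff] at h2
      exact EReal.coe_ne_top _ h2
    have hze : h z = (((h z).toReal : ℝ) : EReal) := (EReal.coe_toReal hzt (hbot z)).symm
    rw [hze, EReal.coe_le_coe_iff] at h2
    exact ⟨hzt, by linarith⟩
  -- projection into T
  have projT : ∀ z : Z, h z ≤ ((bb - q z : ℝ) : EReal) →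
      ∃ z' ∈ T, h z' = h z ∧ E z' = E z := by
    intro z hz
    set d : Z := -((Submodule.orthogonalProjectionOnto L z : Z)) with hddef
    have hdL : d ∈ L := neg_mem (SetLike.coe_mem _)
    have hEd : E d = 0 := ((memL d).mp hdL).1
    have hEzd : E (z + d) = E z := by rw [map_add, hEd, add_zero]
    have hqzd : q (z + d) = q z := by rw [hq_eq, hq_eq, hEzd]
    refine ⟨z + d, ⟨?_, ?_⟩, hconstL d hdL z, hEzd⟩
    · have := Submodule.sub_starProjection_mem_orthogonal (K := L) z
      rw [Submodule.starProjection_apply] at this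
      simpa [hddef, sub_eq_add_neg] using this
    · simp only [Set.mem_setOf_eq]
      rw [hconstL d hdL z, hqzd]
      exact hz
  -- the base point a ∈ T
  have hqzb : q zb = 0 := by rw [hq_eq, hEzb]; simp
  obtain ⟨a, haT, hha, hEa⟩ := projT zb (by
    rw [hqzb]
    rw [hzbeq]
    simp)
  have hqa : q a = 0 := by rw [hq_eq, hEa, hEzb]; simp
  have hat : h a ≠ ⊤ := by rw [hha]; exact hzbt
  have hGa : (h a).toReal + q a = bb := by rw [hqa, hha]; simp [hbbdef]
  -- the v₀ minorant, in terms of u₀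
  have hv₀inner : ∀ y : Z, ⟪v₀, y⟫ = ⟪u₀, E y⟫ := by
    intro y
    rw [← hu₀]
    exact LinearMap.adjoint_inner_left E y u₀
  set c₀ : ℝ := (hstar v₀).toReal with hc₀def
  have minor₀ : ∀ y : Z, h y ≠ ⊤ → ⟪u₀, E y⟫ - c₀ ≤ (h y).toReal := by
    intro y hy
    rw [← hv₀inner]
    exact minor v₀ hv₀dom y hy
  -- uniform bound for ‖E z - e‖ on T
  set R : ℝ := Real.sqrt (2 * (bb + c₀ - ⟪u₀, e⟫) + ‖u₀‖ ^ 2) + ‖u₀‖ with hRdef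
  have hTbound : ∀ z ∈ T, ‖E z - e‖ ≤ R := by
    intro z hz
    obtain ⟨hzt, hzle⟩ := hTmem z hz
    have h1 : ⟪u₀, E z⟫ - c₀ ≤ (h z).toReal := minor₀ z hzt
    have h2 : (h z).toReal + 1 / 2 * ‖E z - e‖ ^ 2 ≤ bb := by rw [← hq_eq]; exact hzle
    have hw : ⟪u₀, E z - e⟫ = ⟪u₀, E z⟫ - ⟪u₀, e⟫ := inner_sub_right u₀ (E z) e
    have h3 : ⟪u₀, E z - e⟫ + 1 / 2 * ‖E z - e‖ ^ 2 ≤ bb + c₀ - ⟪u₀, e⟫ := by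
      rw [hw]; linarith
    have h4 : ‖E z - e + u₀‖ ^ 2 = ‖E z - e‖ ^ 2 + 2 * ⟪E z - e, u₀⟫ + ‖u₀‖ ^ 2 :=
      norm_add_sq_real (E z - e) u₀
    have hcomm : ⟪E z - e, u₀⟫ = ⟪u₀, E z - e⟫ := real_inner_comm _ _
    have h5 : ‖E z - e + u₀‖ ^ 2 ≤ 2 * (bb + c₀ - ⟪u₀, e⟫) + ‖u₀‖ ^ 2 := by
      rw [h4]
      linarith
    have h6 : ‖E z - e + u₀‖ ≤ Real.sqrt (2 * (bb + c₀ - ⟪u₀, e⟫) + ‖u₀‖ ^ 2) := by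
      rw [← Real.sqrt_sq (norm_nonneg (E z - e + u₀))]
      exact Real.sqrt_le_sqrt h5
    have h7 : ‖E z - e‖ ≤ ‖E z - e + u₀‖ + ‖u₀‖ := by
      calc ‖E z - e‖ = ‖(E z - e + u₀) - u₀‖ := by congr 1; abel
        _ ≤ ‖E z - e + u₀‖ + ‖u₀‖ := norm_sub_le _ _
    rw [hRdef]
    linarith
  have hEnormT : ∀ z ∈ T, ‖E z‖ ≤ R + ‖e‖ := by
    intro z hz
    have h1 : E z = (E z - e) + e := by abel
    calc ‖E z‖ = ‖(E z - e) + e‖ := by rw [← h1]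
      _ ≤ ‖E z - e‖ + ‖e‖ := norm_add_le _ _
      _ ≤ R + ‖e‖ := by linarith [hTbound z hz]
  -- T is norm-bounded
  have hTnormbdd : ∃ ρ : ℝ, ∀ z ∈ T, ‖z‖ ≤ ρ := by
    by_contra hub
    push_neg at hub
    choose sq hsqT hsqn using fun n : ℕ => hub n
    have hsqpos : ∀ n : ℕ, (0 : ℝ) < ‖sq n‖ := fun n =>
      lt_of_le_of_lt (Nat.cast_nonneg n) (hsqn n)
    set dn : ℕ → Z := fun n => ‖sq n‖⁻¹ • sq n with hdndef
    have hdns : ∀ n, dn n ∈ Metric.sphere (0 : Z) 1 := by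
      intro n
      rw [mem_sphere_zero_iff_norm, hdndef]
      rw [norm_smul, norm_inv, norm_norm]
      exact inv_mul_cancel₀ (ne_of_gt (hsqpos n))
    obtain ⟨d, hdsphere, φ, hφ, hdconv⟩ := (isCompact_sphere (0 : Z) 1).tendsto_subseq hdns
    have hd1 : ‖d‖ = 1 := mem_sphere_zero_iff_norm.mp hdsphere
    have hφat : Filter.Tendsto (fun n => ‖sq (φ n)‖) Filter.atTop Filter.atTop := by
      apply Filter.tendsto_atTop_mono (fun n => le_of_lt
        (lt_of_le_of_lt (Nat.cast_le.mpr (hφ.le_apply)) (hsqn (φ n))))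
      exact tendsto_natCast_atTop_atTop
    have hinv0 : Filter.Tendsto (fun n => ‖sq (φ n)‖⁻¹) Filter.atTop (nhds 0) :=
      Filter.Tendsto.inv_tendsto_atTop hφat
    -- d is in Lᗮ
    have hdperp : d ∈ Lᗮ := by
      have hcl : IsClosed ((Lᗮ : Submodule ℝ Z) : Set Z) :=
        Submodule.closed_of_finiteDimensional _
      apply hcl.mem_of_tendsto hdconv
      apply Filter.Eventually.of_forall
      intro n
      exact Submodule.smul_mem _ _ (hsqT (φ n)).1
    -- E d = 0
    have hEd : E d = 0 := by
      have hlim : Filter.Tendsto (fun n => ‖E (dn (φ n))‖) Filter.atTop (nhds ‖E d‖) :=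
        ((hEc.norm.tendsto d).comp hdconv)
      have hbnd : ∀ n, ‖E (dn (φ n))‖ ≤ ‖sq (φ n)‖⁻¹ * (R + ‖e‖) := by
        intro n
        have h1 : E (dn (φ n)) = ‖sq (φ n)‖⁻¹ • E (sq (φ n)) := by
          rw [hdndef]; exact map_smul E _ _
        rw [h1, norm_smul, norm_inv, norm_norm]
        exact mul_le_mul_of_nonneg_left (hEnormT _ (hsqT (φ n)))
          (inv_nonneg.mpr (norm_nonneg _))
      have hb0 : Filter.Tendsto (fun n => ‖sq (φ n)‖⁻¹ * (R + ‖e‖)) Filter.atTop (nhds 0) := by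
        have := hinv0.mul_const (R + ‖e‖)
        simpa using this
      have hle : ‖E d‖ ≤ 0 := le_of_tendsto_of_tendsto' hlim hb0 hbnd
      exact norm_le_zero_iff.mp hle
    -- inner products with dom h* are ≤ 0
    have hvle : ∀ v : Z, hstar v ≠ ⊤ → ⟪v, d⟫ ≤ 0 := by
      intro v hv
      have hlim : Filter.Tendsto (fun n => ⟪v, dn (φ n)⟫) Filter.atTop (nhds ⟪v, d⟫) :=
        (((continuous_const.inner continuous_id).tendsto d).comp hdconv)
      have hbnd : ∀ n, ⟪v, dn (φ n)⟫ ≤ ‖sq (φ n)‖⁻¹ * (bb + (hstar v).toReal) := by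
        intro n
        have h1 : ⟪v, dn (φ n)⟫ = ‖sq (φ n)‖⁻¹ * ⟪v, sq (φ n)⟫ := by
          rw [hdndef]; exact real_inner_smul_right v _ _
        obtain ⟨hnt, hnle⟩ := hTmem _ (hsqT (φ n))
        have h2 : ⟪v, sq (φ n)⟫ ≤ bb + (hstar v).toReal := by
          have := minor v hv (sq (φ n)) hnt
          have hq' := hq0 (sq (φ n))
          linarith
        rw [h1]
        exact mul_le_mul_of_nonneg_left h2 (inv_nonneg.mpr (norm_nonneg _))
      have hb0 : Filter.Tendsto (fun n => ‖sq (φ n)‖⁻¹ * (bb + (hstar v).toReal))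
          Filter.atTop (nhds 0) := by
        have := hinv0.mul_const (bb + (hstar v).toReal)
        simpa using this
      exact le_of_tendsto_of_tendsto' hlim hb0 hbnd
    -- upgrade to equality via the relative interior point
    have hv₀d : ⟪v₀, d⟫ = 0 := by rw [hv₀inner, hEd, inner_zero_right]
    have hveq : ∀ v : Z, hstar v ≠ ⊤ → ⟪v, d⟫ = 0 := by
      intro v hv
      obtain ⟨ε, hε, hmem⟩ := intrinsic_step hv₀ri (show v ∈ domS from hv)
      have h1 : ⟪ε • (v₀ - v) + v₀, d⟫ ≤ 0 := hvle _ hmem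
      rw [inner_add_left, real_inner_smul_left, inner_sub_left, hv₀d] at h1
      have h2 : ⟪v, d⟫ ≥ 0 := by nlinarith
      exact le_antisymm (hvle v hv) h2
    have hdL : d ∈ L := (memL d).mpr ⟨hEd, hveq⟩
    have : ⟪d, d⟫ = 0 := (Submodule.mem_orthogonal L d).mp hdperp d hdL
    rw [real_inner_self_eq_norm_sq, hd1, one_pow] at this
    exact one_ne_zero this
  -- T is compact
  obtain ⟨ρ, hρ⟩ := hTnormbdd
  have hTsub : T ⊆ Metric.closedBall 0 ρ := fun z hz => by
    rw [Metric.mem_closedBall, dist_zero_right]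
    exact hρ z hz
  have hTcompact : IsCompact T :=
    (isCompact_closedBall (0 : Z) ρ).of_isClosed_subset hTclosed hTsub
  -- minimize G over T
  set G : Z → ℝ := fun z => (h z).toReal + q z with hGdef
  have hGTne : (G '' T).Nonempty := ⟨G a, a, haT, rfl⟩
  have hbddbelow : BddBelow (G '' T) := by
    refine ⟨-(‖u₀‖ * (R + ‖e‖)) - c₀, ?_⟩
    rintro x ⟨z, hz, rfl⟩
    obtain ⟨hzt, -⟩ := hTmem z hz
    have h1 : ⟪u₀, E z⟫ - c₀ ≤ (h z).toReal := minor₀ z hzt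
    have h2 : |⟪u₀, E z⟫| ≤ ‖u₀‖ * ‖E z‖ := abs_real_inner_le_norm u₀ (E z)
    have h3 : ‖u₀‖ * ‖E z‖ ≤ ‖u₀‖ * (R + ‖e‖) :=
      mul_le_mul_of_nonneg_left (hEnormT z hz) (norm_nonneg _)
    have h4 := hq0 z
    have h5 := (abs_le.mp h2).1
    show -(‖u₀‖ * (R + ‖e‖)) - c₀ ≤ (h z).toReal + q z
    linarith
  set μ : ℝ := sInf (G '' T) with hμdef
  have hμle : ∀ z ∈ T, μ ≤ G z := fun z hz => csInf_le hbddbelow ⟨z, hz, rfl⟩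
  have hkey : ∀ n : ℕ, ∃ z ∈ T, G z < μ + 1 / (n + 1) := by
    intro n
    have hlt : μ < μ + 1 / ((n : ℝ) + 1) := by
      have hpos : (0 : ℝ) < 1 / ((n : ℝ) + 1) := by positivity
      linarith
    obtain ⟨x, hxmem, hxlt⟩ := exists_lt_of_csInf_lt hGTne hlt
    obtain ⟨z, hz, rfl⟩ := hxmem
    exact ⟨z, hz, hxlt⟩
  choose w hwT hwG using hkey
  obtain ⟨z₀, hz₀T, ψ, hψ, hwconv⟩ := hTcompact.tendsto_subseq hwT
  obtain ⟨hz₀t, hz₀le⟩ := hTmem z₀ hz₀T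
  have hz₀e : h z₀ = (((h z₀).toReal : ℝ) : EReal) := (EReal.coe_toReal hz₀t (hbot z₀)).symm
  have hminT : ∀ z ∈ T, G z₀ ≤ G z := by
    intro z hz
    refine le_trans ?_ (hμle z hz)
    by_contra hgt
    push_neg at hgt
    set ε : ℝ := (G z₀ - μ) / 3 with hεdef
    have hεpos : 0 < ε := by rw [hεdef]; exact div_pos (sub_pos.mpr hgt) (by norm_num)
    have hev1 : ∀ᶠ n in Filter.atTop, q z₀ - ε < q (w (ψ n)) :=
      ((hqc.tendsto z₀).comp hwconv).eventually (eventually_gt_nhds (by linarith))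
    have hev2 : ∀ᶠ n in Filter.atTop, (((h z₀).toReal - ε : ℝ) : EReal) < h (w (ψ n)) := by
      have hlt2 : (((h z₀).toReal - ε : ℝ) : EReal) < h z₀ := by
        conv_rhs => rw [hz₀e]
        exact EReal.coe_lt_coe_iff.mpr (by linarith)
      exact hwconv.eventually (hlsc z₀ _ hlt2)
    have hev3 : ∀ᶠ n in Filter.atTop, (1 : ℝ) / (ψ n + 1) < ε := by
      obtain ⟨N, hN⟩ := exists_nat_one_div_lt hεpos
      rw [Filter.eventually_atTop]
      refine ⟨N, fun n hn => ?_⟩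
      have hψn : (N : ℝ) + 1 ≤ (ψ n : ℝ) + 1 := by
        have : (N : ℝ) ≤ ψ n := by
          exact_mod_cast le_trans hn (hψ.le_apply)
        linarith
      calc (1 : ℝ) / (ψ n + 1) ≤ 1 / (N + 1) :=
            one_div_le_one_div_of_le (by positivity) hψn
        _ < ε := hN
    obtain ⟨n, h1, h2, h3⟩ := (hev1.and (hev2.and hev3)).exists
    obtain ⟨hwt, -⟩ := hTmem _ (hwT (ψ n))
    have hwe : h (w (ψ n)) = (((h (w (ψ n))).toReal : ℝ) : EReal) :=
      (EReal.coe_toReal hwt (hbot _)).symm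
    rw [hwe, EReal.coe_lt_coe_iff] at h2
    have h4 : G (w (ψ n)) < μ + 1 / (ψ n + 1) := hwG (ψ n)
    have h5 : G (w (ψ n)) = (h (w (ψ n))).toReal + q (w (ψ n)) := rfl
    have h6 : G z₀ = (h z₀).toReal + q z₀ := rfl
    rw [hεdef] at h1 h2 h3
    rw [h5] at h4
    linarith
  -- conclusion
  refine ⟨z₀, fun z => ?_⟩
  have hLHS : h z₀ + ((1 / 2 * ‖E z₀ - e‖ ^ 2 : ℝ) : EReal) = ((G z₀ : ℝ) : EReal) := by
    rw [← hq_eq z₀, hz₀e, ← EReal.coe_add]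
  by_cases hzt : h z = ⊤
  · rw [hLHS, hzt, EReal.top_add_coe]
    exact le_top
  · have hze : h z = (((h z).toReal : ℝ) : EReal) := (EReal.coe_toReal hzt (hbot z)).symm
    by_cases hzin : h z ≤ ((bb - q z : ℝ) : EReal)
    · obtain ⟨z', hz'T, hz'h, hz'E⟩ := projT z hzin
      have hq' : q z' = q z := by rw [hq_eq, hq_eq, hz'E]
      have h5 : G z₀ ≤ G z' := hminT z' hz'T
      have h6 : G z' = (h z).toReal + q z := by
        show (h z').toReal + q z' = (h z).toReal + q z
        rw [hz'h, hq']
      rw [hLHS, ← hq_eq z, hze, ← EReal.coe_add]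
      exact EReal.coe_le_coe_iff.mpr (by rw [h6] at h5; exact h5)
    · have h7 : (bb - q z : ℝ) < (h z).toReal := by
        have := lt_of_not_ge hzin
        rw [hze] at this
        exact_mod_cast EReal.coe_lt_coe_iff.mp this
      have h8 : G z₀ ≤ G a := hminT a haT
      have h9 : G a = bb := hGa
      rw [hLHS, ← hq_eq z, hze, ← EReal.coe_add]
      exact EReal.coe_le_coe_iff.mpr (by
        have := hq0 z
        linarith)
end
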